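/- arXiv:1306.6232 — 6 statements merged into one kernel-verified Lean document; each statement's English description precedes it below -/
import Mathlib

section
/- Let k ≥ 1 and let n_1, …, n_k be nonnegative integers. Then the number of words on the alphabet {1,…,k} in which the letter i appears exactly n_i times (for each i) and no two adjacent letters are equal, equals Φ(∏_{i=1}^k l_{n_i}(t)). -/
/-- The Laguerre-type polynomial `l_k(t)`: `l_0 = 1` and for `k ≥ 1`,
`l_k(t) = Σ_{i=1}^{k} (−1)^{k−i} C(k−1, i−1) t^i / i!`. -/
noncomputable def lag (k : ℕ) : Polynomial ℝ :=
  if k = 0 then 1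
  else ∑ i ∈ Finset.Icc 1 k,
    Polynomial.C ((-1 : ℝ) ^ (k - i) * (Nat.choose (k - 1) (i - 1)) / (Nat.factorial i)) *
      Polynomial.X ^ i

/-- The linear functional `Φ` with `Φ(t^n) = n!`. -/
noncomputable def Phi (p : Polynomial ℝ) : ℝ :=
  ∑ n ∈ p.support, p.coeff n * (Nat.factorial n)

open Polynomial Finset

open Polynomial Finset

lemma lag_coeff (m j : ℕ) (hm : m ≠ 0) :
    (lag m).coeff j =
      if 1 ≤ j ∧ j ≤ m then ((-1 : ℝ) ^ (m - j) * (Nat.choose (m-1) (j-1)) / (Nat.factorial j)) else 0 := by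
  rw [lag, if_neg hm, finset_sum_coeff]
  simp only [coeff_C_mul, coeff_X_pow, mul_ite, mul_one, mul_zero]
  rw [Finset.sum_ite_eq (Finset.Icc 1 m) j]
  simp [Finset.mem_Icc]

lemma lag_zero_eq : lag 0 = 1 := by simp [lag]

lemma lag_R (m : ℕ) : derivative (lag (m+1)) + derivative (lag m) = lag m := by
  rcases Nat.eq_zero_or_pos m with rfl | hm
  · have h1 : lag 1 = Polynomial.X := by
      simp [lag, Finset.Icc_self]
    simp [h1, lag_zero_eq]
  · obtain ⟨a, rfl⟩ : ∃ a, m = a + 1 := ⟨m - 1, by omega⟩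
    ext j
    rw [coeff_add, coeff_derivative, coeff_derivative,
      lag_coeff (a+1+1) (j+1) (by omega), lag_coeff (a+1) (j+1) (by omega),
      lag_coeff (a+1) j (by omega)]
    rcases lt_trichotomy j (a+1) with hj | rfl | hj
    · rcases Nat.eq_zero_or_pos j with rfl | hj1
      · simp only [show (1 ≤ 0+1 ∧ 0+1 ≤ a+1+1) = True by simp, if_true,
          show (1 ≤ 0+1 ∧ 0+1 ≤ a+1) = True by simp [Nat.succ_le_succ], 
          show (1 ≤ 0 ∧ 0 ≤ a+1) = False by simp, if_false]
        simp only [show a+1+1-(0+1) = a+1 by omega, show a+1-(0+1) = a by omega]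
        simp [pow_succ]
      · obtain ⟨b, rfl⟩ : ∃ b, j = b + 1 := ⟨j - 1, by omega⟩
        obtain ⟨c, rfl⟩ : ∃ c, a = b + 1 + c := ⟨a - (b+1), by omega⟩
        simp only [if_pos (by omega : 1 ≤ b+1+1 ∧ b+1+1 ≤ b+1+c+1+1),
          if_pos (by omega : 1 ≤ b+1+1 ∧ b+1+1 ≤ b+1+c+1),
          if_pos (by omega : 1 ≤ b+1 ∧ b+1 ≤ b+1+c+1)]
        simp only [show b+1+c+1+1-(b+1+1) = c+1 by omega, show b+1+c+1-(b+1+1) = c by omega,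
          show b+1+c+1-(b+1) = c+1 by omega, show b+1+c+1-1 = b+c+1 by omega,
          show b+1+c+1+1-1 = b+c+1+1 by omega, show b+1+1-1 = b+1 by omega, show b+1-1 = b by omega]
        have hch : (b+c+1+1).choose (b+1) = (b+c+1).choose b + (b+c+1).choose (b+1) :=
          Nat.choose_succ_succ _ _
        rw [hch]
        have hf : ((b+1+1).factorial : ℝ) = (b+1+1) * (b+1).factorial := by
          rw [Nat.factorial_succ]; push_cast; ring
        have hfpos : ((b+1).factorial : ℝ) ≠ 0 := by positivity
        push_cast
        rw [hf]
        field_simp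
        ring
    · simp only [if_pos (by omega : 1 ≤ a+1+1 ∧ a+1+1 ≤ a+1+1),
        if_neg (by omega : ¬(1 ≤ a+1+1 ∧ a+1+1 ≤ a+1)),
        if_pos (by omega : 1 ≤ a+1 ∧ a+1 ≤ a+1)]
      simp only [Nat.sub_self, show a+1+1-(a+1+1) = 0 by omega, show a+1-1 = a by omega,
        show a+1+1-1 = a+1 by omega, show a+1-(a+1) = 0 by omega]
      rw [Nat.choose_self, Nat.choose_self]
      have hf : ((a+1+1).factorial : ℝ) = (a+1+1) * (a+1).factorial := by
        rw [Nat.factorial_succ]; push_cast; ring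
      have hfpos : ((a+1).factorial : ℝ) ≠ 0 := by positivity
      push_cast
      rw [hf]
      field_simp
      ring
    · rw [if_neg (by omega), if_neg (by omega), if_neg (by omega)]
      ring

lemma Phi_eq_sum (p : Polynomial ℝ) : Phi p = p.sum (fun n a => a * n.factorial) := rfl

lemma Phi_zero : Phi 0 = 0 := by simp [Phi]

lemma Phi_add (p q : Polynomial ℝ) : Phi (p + q) = Phi p + Phi q := by
  rw [Phi_eq_sum, Phi_eq_sum, Phi_eq_sum]
  exact Polynomial.sum_add_index p q _ (fun i => by simp) (fun a b c => by ring)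

lemma Phi_neg (p : Polynomial ℝ) : Phi (-p) = -Phi p := by
  have := Phi_add (-p) p
  simp only [neg_add_cancel, Phi_zero] at this
  linarith

lemma Phi_sub (p q : Polynomial ℝ) : Phi (p - q) = Phi p - Phi q := by
  rw [sub_eq_add_neg, Phi_add, Phi_neg]; ring

lemma Phi_monomial (n : ℕ) (a : ℝ) : Phi (Polynomial.monomial n a) = a * n.factorial := by
  rw [Phi_eq_sum, Polynomial.sum_monomial_index]
  simp

lemma Phi_finset_sum {ι : Type*} (s : Finset ι) (f : ι → Polynomial ℝ) :
    Phi (∑ i ∈ s, f i) = ∑ i ∈ s, Phi (f i) := by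
  induction s using Finset.cons_induction with
  | empty => simp [Phi_zero]
  | cons a s ha ih => rw [Finset.sum_cons, Finset.sum_cons, Phi_add, ih]

lemma Phi_ibp (p : Polynomial ℝ) : Phi p = p.eval 0 + Phi (derivative p) := by
  induction p using Polynomial.induction_on' with
  | add p q hp hq =>
    rw [Phi_add, derivative_add, Phi_add, Polynomial.eval_add]
    linarith
  | monomial n a =>
    cases n with
    | zero =>
      rw [Phi_monomial, Polynomial.derivative_monomial, Polynomial.eval_monomial]
      simp [Phi_monomial, Phi_zero]
    | succ n =>
      rw [Phi_monomial, Polynomial.derivative_monomial, Polynomial.eval_monomial]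
      simp only [Nat.add_sub_cancel, Phi_monomial, Nat.factorial_succ]
      push_cast
      ring

lemma Phi_one : Phi 1 = 1 := by
  have := Phi_monomial 0 1
  simpa using this

lemma lag_eval_zero (m : ℕ) : (lag m).eval 0 = if m = 0 then 1 else 0 := by
  rcases Nat.eq_zero_or_pos m with rfl | hm
  · simp [lag_zero_eq]
  · rw [← Polynomial.coeff_zero_eq_eval_zero, lag_coeff m 0 hm.ne', if_neg (by omega)]
    simp [hm.ne']

lemma derivative_finset_prod {ι : Type*} [DecidableEq ι] (s : Finset ι) (f : ι → Polynomial ℝ) :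
    derivative (∏ i ∈ s, f i) = ∑ i ∈ s, (∏ j ∈ s.erase i, f j) * derivative (f i) := by
  induction s using Finset.induction_on with
  | empty => simp
  | @insert a s ha ih =>
    rw [Finset.prod_insert ha, Polynomial.derivative_mul, ih, Finset.sum_insert ha,
      Finset.erase_insert ha, Finset.mul_sum, mul_comm (derivative (f a))]
    congr 1
    refine Finset.sum_congr rfl fun i hi => ?_
    have hia : i ≠ a := fun h => ha (h ▸ hi)
    rw [Finset.erase_insert_of_ne hia.symm, Finset.prod_insert (fun h => ha (Finset.mem_of_mem_erase h))]
    ring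

lemma alg_step {ι : Type*} [DecidableEq ι] (s : Finset ι) (n : ι → ℕ) (m : ℕ) :
    Phi (derivative (lag (m+1)) * ∏ j ∈ s, lag (n j)) =
      (if m = 0 then (1:ℝ) else 0) * ∏ j ∈ s, (if n j = 0 then (1:ℝ) else 0) +
      ∑ j ∈ s, Phi (derivative (lag (n j)) * (lag m * ∏ r ∈ s.erase j, lag (n r))) := by
  have hR : derivative (lag (m+1)) = lag m - derivative (lag m) :=
    eq_sub_of_add_eq (lag_R m)
  set Q := ∏ j ∈ s, lag (n j) with hQdef
  rw [hR, sub_mul, Phi_sub]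
  have hibp := Phi_ibp (lag m * Q)
  rw [Polynomial.derivative_mul, Phi_add] at hibp
  have heval : (lag m * Q).eval 0 =
      (if m = 0 then (1:ℝ) else 0) * ∏ j ∈ s, (if n j = 0 then (1:ℝ) else 0) := by
    rw [Polynomial.eval_mul, lag_eval_zero, hQdef, Polynomial.eval_prod]
    congr 1
    exact Finset.prod_congr rfl fun j _ => lag_eval_zero (n j)
  have hdQ : Phi (lag m * derivative Q) =
      ∑ j ∈ s, Phi (derivative (lag (n j)) * (lag m * ∏ r ∈ s.erase j, lag (n r))) := by
    rw [hQdef, derivative_finset_prod, Finset.mul_sum, Phi_finset_sum]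
    exact Finset.sum_congr rfl fun j _ => by rw [show lag m * ((∏ r ∈ s.erase j, lag (n r)) * derivative (lag (n j))) = derivative (lag (n j)) * (lag m * ∏ r ∈ s.erase j, lag (n r)) by ring]
  rw [heval, hdQ] at hibp
  linarith

section Comb
variable {k : ℕ}

lemma nat_card_sigma {ι : Type*} [Fintype ι] {F : ι → Type*} [∀ i, Finite (F i)] :
    Nat.card (Σ i, F i) = ∑ i, Nat.card (F i) := by
  haveI : ∀ i, Fintype (F i) := fun i => Fintype.ofFinite _
  simp [Nat.card_eq_fintype_card, Fintype.card_sigma]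

lemma length_eq_sum_count (w : List (Fin k)) : w.length = ∑ i, w.count i := by
  have h := Multiset.sum_count_eq_card (s := (Finset.univ : Finset (Fin k)))
    (m := (w : Multiset (Fin k))) (fun a _ => Finset.mem_univ a)
  simp only [Multiset.coe_count, Multiset.coe_card] at h
  omega

lemma finite_words (n : Fin k → ℕ) (P : List (Fin k) → Prop)
    (h : ∀ w, P w → ∀ i, w.count i = n i) : Finite {w : List (Fin k) // P w} := by
  have hsub : {w : List (Fin k) | P w} ⊆ {l : List (Fin k) | l.length = ∑ i, n i} := by
    intro w hw
    simp only [Set.mem_setOf_eq] at *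
    rw [length_eq_sum_count]
    exact Finset.sum_congr rfl fun i _ => h w hw i
  exact ((List.finite_length_eq _ _).subset hsub).to_subtype

lemma classify (A : List (Fin k) → Prop) (hfin : Finite {w : List (Fin k) // A w}) :
    Nat.card {w : List (Fin k) // A w} =
      Nat.card {w : List (Fin k) // A w ∧ w = []} +
        ∑ j, Nat.card {w : List (Fin k) // A w ∧ w.getLast? = some j} := by
  classical
  haveI := hfin
  rw [← Nat.card_congr (Equiv.sigmaFiberEquiv
    (fun w : {w : List (Fin k) // A w} => w.1.getLast?))]
  rw [nat_card_sigma, Fintype.sum_option]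
  congr 1
  · exact Nat.card_congr ((Equiv.subtypeSubtypeEquivSubtypeInter A
        (fun w => w.getLast? = none)).trans
      (Equiv.subtypeEquivRight (fun w =>
        and_congr_right fun _ => List.getLast?_eq_none_iff)))
  · exact Finset.sum_congr rfl fun j _ => Nat.card_congr
      (Equiv.subtypeSubtypeEquivSubtypeInter A (fun w => w.getLast? = some j))

lemma card_nil_case (A : List (Fin k) → Prop) [Decidable (A [])] :
    Nat.card {w : List (Fin k) // A w ∧ w = []} = if A [] then 1 else 0 := by
  split_ifs with h
  · haveI : Unique {w : List (Fin k) // A w ∧ w = []} :=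
      { default := ⟨[], h, rfl⟩, uniq := fun w => Subtype.ext w.2.2 }
    exact Nat.card_unique
  · haveI : IsEmpty {w : List (Fin k) // A w ∧ w = []} := ⟨fun w => h (w.2.2 ▸ w.2.1)⟩
    exact Nat.card_of_isEmpty

noncomputable def T (n : Fin k → ℕ) (i : Fin k) : ℕ :=
  Nat.card {w : List (Fin k) //
    (List.Chain' (· ≠ ·) w ∧ ∀ j, w.count j = n j) ∧ w.getLast? = some i}

lemma T_zero (n : Fin k → ℕ) (i : Fin k) (h : n i = 0) : T n i = 0 := by
  haveI : IsEmpty {w : List (Fin k) //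
      (List.Chain' (· ≠ ·) w ∧ ∀ j, w.count j = n j) ∧ w.getLast? = some i} := by
    constructor
    rintro ⟨w, ⟨hc, hcount⟩, hlast⟩
    obtain ⟨l', rfl⟩ := List.getLast?_eq_some_iff.mp hlast
    have hci := hcount i
    rw [h] at hci
    simp [List.count_append] at hci
  exact Nat.card_of_isEmpty
end Comb

section Comb2
variable {k : ℕ}

lemma count_append_singleton (l : List (Fin k)) (i j : Fin k) :
    (l ++ [i]).count j = l.count j + if j = i then 1 else 0 := by
  by_cases h : j = i
  · subst h; simp [List.count_append]
  · simp [List.count_append, h, Ne.symm h]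

lemma T_rec (n : Fin k → ℕ) (i : Fin k) (hni : n i ≠ 0) :
    T n i = (if ∀ j, Function.update n i (n i - 1) j = 0 then 1 else 0) +
      ∑ j, (if j = i then 0 else T (Function.update n i (n i - 1)) j) := by
  classical
  set n' := Function.update n i (n i - 1) with hn'
  set B : List (Fin k) → Prop := fun w =>
    (List.Chain' (· ≠ ·) w ∧ ∀ j, w.count j = n' j) ∧ w.getLast? ≠ some i with hB
  have hn'i : n' i = n i - 1 := Function.update_self i _ n
  have hn'ne : ∀ j, j ≠ i → n' j = n j := fun j hj => Function.update_of_ne hj _ n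
  have key : T n i = Nat.card {w : List (Fin k) // B w} := by
    apply Nat.card_congr
    refine ⟨fun w => ⟨w.1.dropLast, ?_⟩, fun w => ⟨w.1 ++ [i], ?_⟩, ?_, ?_⟩
    · -- forward membership
      obtain ⟨w, ⟨hc, hcount⟩, hlast⟩ := w
      obtain ⟨l', rfl⟩ := List.getLast?_eq_some_iff.mp hlast
      rw [List.dropLast_concat]
      rw [List.Chain', List.isChain_append] at hc
      refine ⟨⟨hc.1, fun j => ?_⟩, fun hlast' => ?_⟩
      · have := hcount j
        rw [count_append_singleton] at this
        by_cases hj : j = i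
        · subst hj; rw [if_pos rfl] at this; omega
        · rw [hn'ne j hj]; rw [if_neg hj] at this; omega
      · exact hc.2.2 i (by rw [hlast']; rfl) i rfl rfl
    · -- backward membership
      obtain ⟨w, ⟨hc, hcount⟩, hlast⟩ := w
      refine ⟨⟨?_, fun j => ?_⟩, List.getLast?_concat⟩
      · rw [List.Chain', List.isChain_append]
        refine ⟨hc, List.isChain_singleton i, fun x hx y hy => ?_⟩
        have hyi : y = i := by simpa [eq_comm] using hy
        subst hyi
        intro hxy
        subst hxy
        exact hlast (by simpa using hx)
      · rw [count_append_singleton]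
        by_cases hj : j = i
        · subst hj; rw [if_pos rfl, hcount j, hn'i]; omega
        · rw [if_neg hj, hcount j, hn'ne j hj]; omega
    · rintro ⟨w, hw, hlast⟩
      obtain ⟨l', rfl⟩ := List.getLast?_eq_some_iff.mp hlast
      exact Subtype.ext (by simp [List.dropLast_concat])
    · rintro ⟨w, hw⟩
      exact Subtype.ext (by simp [List.dropLast_concat])
  rw [key]
  haveI hfinB : Finite {w : List (Fin k) // B w} :=
    finite_words n' B (fun w hw => hw.1.2)
  rw [classify B hfinB, card_nil_case B]
  congr 1
  · have hBnil : B [] ↔ ∀ j, n' j = 0 := by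
      simp [hB, eq_comm, List.Chain']
    rw [if_congr hBnil rfl rfl]
  · refine Finset.sum_congr rfl fun j _ => ?_
    by_cases hj : j = i
    · rw [if_pos hj]
      haveI : IsEmpty {w : List (Fin k) // B w ∧ w.getLast? = some j} :=
        ⟨fun w => w.2.1.2 (by rw [← hj]; exact w.2.2)⟩
      exact Nat.card_of_isEmpty
    · rw [if_neg hj]
      apply Nat.card_congr
      apply Equiv.subtypeEquivRight
      intro w
      constructor
      · rintro ⟨hBw, hlast⟩; exact ⟨hBw.1, hlast⟩
      · rintro ⟨hw, hlast⟩
        exact ⟨⟨hw, fun hci => hj (by rw [hlast] at hci; exact Option.some_injective _ hci)⟩, hlast⟩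

end Comb2


section Main
variable {k : ℕ}

lemma card_split (n : Fin k → ℕ) :
    Nat.card {w : List (Fin k) // List.Chain' (· ≠ ·) w ∧ ∀ i, w.count i = n i} =
      (if ∀ i, n i = 0 then 1 else 0) + ∑ i, T n i := by
  classical
  haveI hfin : Finite {w : List (Fin k) // List.Chain' (· ≠ ·) w ∧ ∀ i, w.count i = n i} :=
    finite_words n _ (fun w hw => hw.2)
  rw [classify _ hfin, card_nil_case]
  congr 1
  · have h : ((fun w : List (Fin k) => List.Chain' (· ≠ ·) w ∧ ∀ i, w.count i = n i) [])
      ↔ ∀ i, n i = 0 := by simp [eq_comm, List.Chain']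
    rw [if_congr h rfl rfl]

lemma T_eq (N : ℕ) : ∀ {k : ℕ} (n : Fin k → ℕ) (i : Fin k), (∑ j, n j) = N →
    (T n i : ℝ) = Phi (derivative (lag (n i)) * ∏ j ∈ Finset.univ.erase i, lag (n j)) := by
  induction N using Nat.strong_induction_on with
  | _ N IH =>
    intro k n i hN
    by_cases hni : n i = 0
    · rw [T_zero n i hni, hni, lag_zero_eq]
      simp [Phi_zero]
    · obtain ⟨m, hm⟩ : ∃ m, n i = m + 1 := ⟨n i - 1, by omega⟩
      set n' := Function.update n i m with hn'
      have hrec := T_rec n i hni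
      rw [show n i - 1 = m by omega] at hrec
      have hsum : (∑ j, n' j) + 1 = N := by
        rw [hn', Finset.sum_update_of_mem (Finset.mem_univ i), ← hN,
          ← Finset.add_sum_erase Finset.univ n (Finset.mem_univ i), hm,
          Finset.sdiff_singleton_eq_erase]
        ring
      have hlt : (∑ j, n' j) < N := by omega
      rw [hm, alg_step (Finset.univ.erase i) n m, hrec]
      push_cast
      congr 1
      · by_cases hall : ∀ j, n' j = 0
        · rw [if_pos hall]
          have hm0 : m = 0 := by
            have := hall i; rwa [hn', Function.update_self] at this
          rw [if_pos hm0, Finset.prod_eq_one (fun j hj => by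
            rw [if_pos]
            have := hall j
            rwa [hn', Function.update_of_ne (Finset.ne_of_mem_erase hj)] at this)]
          norm_num
        · rw [if_neg hall]
          push_neg at hall
          obtain ⟨j, hj⟩ := hall
          by_cases hji : j = i
          · have hm0 : m ≠ 0 := by
              subst hji; rwa [hn', Function.update_self] at hj
            rw [if_neg hm0, zero_mul]
          · rw [Finset.prod_eq_zero (Finset.mem_erase.mpr ⟨hji, Finset.mem_univ j⟩)
              (by rw [if_neg]; rwa [hn', Function.update_of_ne hji] at hj), mul_zero]
      · rw [← Finset.sum_erase (f := fun j => if j = i then (0:ℝ) else (T n' j : ℝ))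
          (a := i) Finset.univ (by simp)]
        refine Finset.sum_congr rfl fun j hj => ?_
        have hji : j ≠ i := Finset.ne_of_mem_erase hj
        rw [if_neg hji]
        rw [IH _ hlt n' j rfl]
        have hn'j : n' j = n j := Function.update_of_ne hji _ n
        have hprod : ∏ r ∈ Finset.univ.erase j, lag (n' r)
            = lag m * ∏ r ∈ (Finset.univ.erase i).erase j, lag (n r) := by
          rw [← Finset.mul_prod_erase (Finset.univ.erase j) (fun r => lag (n' r))
            (Finset.mem_erase.mpr ⟨Ne.symm hji, Finset.mem_univ i⟩)]
          congr 1
          · rw [hn', Function.update_self]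
          · rw [Finset.erase_right_comm]
            exact Finset.prod_congr rfl fun r hr => by
              rw [hn', Function.update_of_ne (Finset.ne_of_mem_erase (Finset.mem_of_mem_erase hr)) _ n]
        rw [hn'j, hprod]

end Main

/-- The number of Carlitz words (no two adjacent letters equal) on the alphabet `Fin k`
in which letter `i` appears exactly `n i` times is `Φ(∏_i l_{n i}(t))`. -/
theorem stmt0 (k : ℕ) (hk : 1 ≤ k) (n : Fin k → ℕ) :
    Phi (∏ i, lag (n i)) =
      Nat.card {w : List (Fin k) // List.Chain' (· ≠ ·) w ∧ ∀ i, w.count i = n i} := by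
  classical
  rw [Phi_ibp, derivative_finset_prod, Phi_finset_sum, Polynomial.eval_prod, card_split n]
  push_cast
  congr 1
  · by_cases h : ∀ i, n i = 0
    · rw [if_pos h]
      rw [Finset.prod_eq_one (fun i _ => by rw [lag_eval_zero, if_pos (h i)])]
    · rw [if_neg h]
      push_neg at h
      obtain ⟨i, hi⟩ := h
      rw [Finset.prod_eq_zero (Finset.mem_univ i) (by rw [lag_eval_zero, if_neg hi])]
  · refine Finset.sum_congr rfl fun i _ => ?_
    rw [mul_comm]
    exact (T_eq (∑ j, n j) n i rfl).symm
end

section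
/- Fix k ≥ 1. In the ring of multivariate formal power series over ℚ in variables x_1, …, x_k, let C be the series whose coefficient at the monomial x_1^{d_1}⋯x_k^{d_k} is the number of Carlitz words on the alphabet {1,…,k} in which letter i appears exactly d_i times. Then C · (1 − Σ_{i=1}^k x_i·(1 + x_i)^{-1}) = 1, where (1 + x_i)^{-1} denotes the multiplicative inverse of the power series 1 + x_i. -/
open Finset MvPowerSeries

namespace CarlitzAux

variable {k : ℕ}

/-- number of Carlitz words with letter counts `d` -/
noncomputable def NN (k : ℕ) (d : Fin k →₀ ℕ) : ℕ :=
  Nat.card {w : List (Fin k) // List.Chain' (· ≠ ·) w ∧ ∀ i, w.count i = d i}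

noncomputable def Hc (k : ℕ) (d : Fin k →₀ ℕ) (i : Fin k) : ℕ :=
  Nat.card {w : List (Fin k) //
    (List.Chain' (· ≠ ·) w ∧ ∀ j, w.count j = d j) ∧ w.head? = some i}

noncomputable def Bc (k : ℕ) (d : Fin k →₀ ℕ) (i : Fin k) : ℕ :=
  Nat.card {w : List (Fin k) //
    (List.Chain' (· ≠ ·) w ∧ ∀ j, w.count j = d j) ∧ w.head? ≠ some i}

lemma sum_count (w : List (Fin k)) : ∑ i, w.count i = w.length := by
  classical
  rw [← List.sum_toFinset_count_eq_length w]
  refine (Finset.sum_subset (Finset.subset_univ _) ?_).symm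
  intro x _ hx
  simp [List.count_eq_zero, List.mem_toFinset] at hx ⊢
  exact hx

lemma finite_counts (d : Fin k →₀ ℕ) :
    {w : List (Fin k) | ∀ i, w.count i = d i}.Finite := by
  apply (List.finite_length_eq (Fin k) (∑ i, d i)).subset
  intro w hw
  simp only [Set.mem_setOf_eq] at hw ⊢
  rw [← sum_count w]
  exact Finset.sum_congr rfl fun i _ => hw i

instance instFinN (d : Fin k →₀ ℕ) :
    Finite {w : List (Fin k) // List.Chain' (· ≠ ·) w ∧ ∀ i, w.count i = d i} :=
  ((finite_counts d).subset (fun w hw => hw.2)).to_subtype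

instance instFinH (d : Fin k →₀ ℕ) (i : Fin k) :
    Finite {w : List (Fin k) //
      (List.Chain' (· ≠ ·) w ∧ ∀ j, w.count j = d j) ∧ w.head? = some i} :=
  ((finite_counts d).subset (fun w hw => hw.1.2)).to_subtype

instance instFinB (d : Fin k →₀ ℕ) (i : Fin k) :
    Finite {w : List (Fin k) //
      (List.Chain' (· ≠ ·) w ∧ ∀ j, w.count j = d j) ∧ w.head? ≠ some i} :=
  ((finite_counts d).subset (fun w hw => hw.1.2)).to_subtype

lemma nat_card_sigma {ι : Type*} [Fintype ι] (f : ι → Type*) [∀ i, Finite (f i)] :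
    Nat.card (Σ i, f i) = ∑ i, Nat.card (f i) := by
  letI : ∀ i, Fintype (f i) := fun i => Fintype.ofFinite _
  simp [Nat.card_eq_fintype_card, Fintype.card_sigma]

lemma partition (d : Fin k →₀ ℕ) (i : Fin k) : NN k d = Hc k d i + Bc k d i := by
  classical
  rw [NN, ← Nat.card_congr (Equiv.sumCompl
    (fun x : {w : List (Fin k) // List.Chain' (· ≠ ·) w ∧ ∀ j, w.count j = d j} =>
      x.1.head? = some i)), Nat.card_sum]
  congr 1
  · exact Nat.card_congr (Equiv.subtypeSubtypeEquivSubtypeInter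
      (fun w : List (Fin k) => List.Chain' (· ≠ ·) w ∧ ∀ j, w.count j = d j)
      (fun w => w.head? = some i))
  · exact Nat.card_congr (Equiv.subtypeSubtypeEquivSubtypeInter
      (fun w : List (Fin k) => List.Chain' (· ≠ ·) w ∧ ∀ j, w.count j = d j)
      (fun w => w.head? ≠ some i))

lemma Hc_zero (d : Fin k →₀ ℕ) (i : Fin k) (hd : d i = 0) : Hc k d i = 0 := by
  have : IsEmpty {w : List (Fin k) //
      (List.Chain' (· ≠ ·) w ∧ ∀ j, w.count j = d j) ∧ w.head? = some i} := by
    refine ⟨fun w => ?_⟩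
    have hi : i ∈ w.1 := List.mem_of_mem_head? (by rw [w.2.2]; rfl)
    have := w.2.1.2 i
    rw [hd, List.count_eq_zero] at this
    exact this hi
  exact Nat.card_of_isEmpty

lemma Hc_succ (d : Fin k →₀ ℕ) (i : Fin k) :
    Hc k (d + Finsupp.single i 1) i = Bc k d i := by
  classical
  have hmap : ∀ w : {w : List (Fin k) //
      (List.Chain' (· ≠ ·) w ∧ ∀ j, w.count j = d j) ∧ w.head? ≠ some i},
      (List.Chain' (· ≠ ·) (i :: w.1) ∧
        ∀ j, (i :: w.1).count j = ((d + Finsupp.single i 1 : Fin k →₀ ℕ) : Fin k →₀ ℕ) j) ∧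
        (i :: w.1).head? = some i := by
    intro w
    refine ⟨⟨?_, ?_⟩, rfl⟩
    · refine List.isChain_cons.mpr ?_
      refine ⟨fun b hb => ?_, w.2.1.1⟩
      intro hib
      exact w.2.2 (by rw [← hib] at hb; exact hb)
    · intro j
      rw [List.count_cons, w.2.1.2 j, Finsupp.add_apply, Finsupp.single_apply]
      by_cases h : j = i
      · subst h; simp
      · have h' : ¬ i = j := fun hh => h hh.symm
        simp [h, h']
  refine Nat.card_congr (Equiv.ofBijective
    (fun w => ⟨i :: w.1, hmap w⟩) ⟨?_, ?_⟩).symm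
  · intro a b hab
    simp only [Subtype.mk.injEq, List.cons.injEq] at hab
    exact Subtype.ext hab.2
  · rintro ⟨v, ⟨hv1, hv2⟩, hv3⟩
    match v, hv1, hv2, hv3 with
    | a :: t, hv1, hv2, hv3 =>
      have ha : a = i := by simpa using hv3
      subst ha
      have hc := List.isChain_cons.mp hv1
      refine ⟨⟨t, ⟨hc.2, ?_⟩, ?_⟩, rfl⟩
      · intro j
        have h5 := hv2 j
        rw [List.count_cons, Finsupp.add_apply, Finsupp.single_apply] at h5
        by_cases h : j = a
        · subst h; simp at h5; omega
        · have h' : ¬ a = j := fun hh => h hh.symm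
          simp [h, h'] at h5; omega
      · intro ht
        exact (hc.1 a (by rw [ht]; rfl)) rfl

lemma NN_sum_Hc (d : Fin k →₀ ℕ) (hd : d ≠ 0) : NN k d = ∑ i, Hc k d i := by
  classical
  rw [NN]
  simp only [Hc]
  rw [← nat_card_sigma (fun i => {w : List (Fin k) //
    (List.Chain' (· ≠ ·) w ∧ ∀ j, w.count j = d j) ∧ w.head? = some i})]
  refine Nat.card_congr (Equiv.ofBijective
    (fun x => ⟨x.2.1, x.2.2.1⟩) ⟨?_, ?_⟩).symm
  · intro x y h
    obtain ⟨i, w⟩ := x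
    obtain ⟨i', w'⟩ := y
    have hww : w.1 = w'.1 := congrArg Subtype.val h
    have hii : i = i' := by
      have h1 := w.2.2
      have h2 := w'.2.2
      rw [hww, h2] at h1
      exact (Option.some.inj h1).symm
    subst hii
    exact congrArg (Sigma.mk i) (Subtype.ext hww)
  · rintro ⟨w, hw⟩
    match w, hw with
    | [], hw =>
      exfalso
      apply hd
      ext j
      simpa using (hw.2 j).symm
    | a :: t, hw =>
      exact ⟨⟨a, ⟨a :: t, hw, rfl⟩⟩, rfl⟩

lemma Bc_formula (n : ℕ) (d : Fin k →₀ ℕ) (i : Fin k) (hd : d i = n) :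
    (Bc k d i : ℚ) = ∑ m ∈ Finset.range (n + 1),
      (-1 : ℚ) ^ m * NN k (d - Finsupp.single i m) := by
  induction n generalizing d with
  | zero =>
    have h1 := partition d i
    rw [Hc_zero d i hd] at h1
    simp only [zero_add, Finset.sum_range_one, pow_zero, one_mul,
      Finsupp.single_zero, tsub_zero]
    rw [h1]
    push_cast
    ring
  | succ n ih =>
    have hdd : d = (d - Finsupp.single i 1) + Finsupp.single i 1 := by
      ext j
      simp only [Finsupp.add_apply, Finsupp.tsub_apply, Finsupp.single_apply]
      split_ifs with h
      · subst h; omega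
      · simp
    have h2 : Hc k d i = Bc k (d - Finsupp.single i 1) i := by
      conv_lhs => rw [hdd]
      exact Hc_succ _ i
    have h3 : ((d - Finsupp.single i 1 : Fin k →₀ ℕ)) i = n := by
      rw [Finsupp.tsub_apply, Finsupp.single_apply]
      simp [hd]
    have h1 := partition d i
    have key : (Bc k d i : ℚ) = NN k d - Bc k (d - Finsupp.single i 1) i := by
      rw [← h2]; rw [h1]; push_cast; ring
    rw [key, ih _ h3]
    have single_sub : ∀ m : ℕ, d - Finsupp.single i 1 - Finsupp.single i m
        = d - Finsupp.single i (m + 1) := by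
      intro m
      rw [tsub_tsub, ← Finsupp.single_add, Nat.add_comm]
    simp only [single_sub]
    conv_rhs => rw [Finset.sum_range_succ']
    rw [Finsupp.single_zero, tsub_zero]
    have hterm : ∀ m ∈ Finset.range (n + 1),
        (-1 : ℚ) ^ (m + 1) * NN k (d - Finsupp.single i (m + 1))
          = -((-1 : ℚ) ^ m * NN k (d - Finsupp.single i (m + 1))) := fun m _ => by ring
    rw [Finset.sum_congr rfl hterm, Finset.sum_neg_distrib]
    ring

/-- the series `(1+x_i)⁻¹ = ∑ (-1)^n x_i^n` -/
noncomputable def Sser (k : ℕ) (i : Fin k) : MvPowerSeries (Fin k) ℚ :=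
  fun e => if e = Finsupp.single i (e i) then (-1 : ℚ) ^ (e i) else 0

lemma coeff_Sser (i : Fin k) (e : Fin k →₀ ℕ) :
    MvPowerSeries.coeff e (Sser k i)
      = if e = Finsupp.single i (e i) then (-1 : ℚ) ^ (e i) else 0 := rfl

lemma shape_iff (i : Fin k) (e : Fin k →₀ ℕ) :
    e = Finsupp.single i (e i) ↔ ∀ j, j ≠ i → e j = 0 := by
  constructor
  · intro h j hj
    conv_lhs => rw [h]
    rw [Finsupp.single_apply, if_neg (fun hh => hj hh.symm)]
  · intro h
    ext j
    rw [Finsupp.single_apply]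
    by_cases hj : i = j
    · subst hj; simp
    · rw [if_neg hj]
      exact h j (fun hh => hj hh.symm)

lemma one_add_X_mul_Sser (i : Fin k) :
    (1 + MvPowerSeries.X i) * Sser k i = 1 := by
  classical
  ext e
  rw [add_mul, one_mul, map_add, MvPowerSeries.X,
    MvPowerSeries.coeff_monomial_mul, MvPowerSeries.coeff_one, coeff_Sser]
  by_cases he : e = 0
  · subst he
    rw [if_pos rfl, if_pos (by simp), if_neg (by
      intro hle
      have := hle i
      simp [Finsupp.single_apply] at this)]
    simp
  · rw [if_neg he]
    by_cases hei : e i = 0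
    · rw [if_neg, if_neg]
      · simp
      · intro hle
        have := hle i
        simp [Finsupp.single_apply, hei] at this
      · intro hsh
        apply he
        ext j
        by_cases hj : j = i
        · subst hj; simpa using hei
        · simpa using (shape_iff i e).mp hsh j hj
    · have hle : Finsupp.single i 1 ≤ e := by
        rw [Finsupp.single_le_iff]
        omega
      rw [if_pos hle, coeff_Sser]
      have hsub : ∀ j, j ≠ i → (e - Finsupp.single i 1 : Fin k →₀ ℕ) j = e j := by
        intro j hj
        rw [Finsupp.tsub_apply, Finsupp.single_apply, if_neg (fun hh => hj hh.symm)]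
        omega
      have hsubi : (e - Finsupp.single i 1 : Fin k →₀ ℕ) i = e i - 1 := by
        rw [Finsupp.tsub_apply, Finsupp.single_apply, if_pos rfl]
      by_cases hsh : e = Finsupp.single i (e i)
      · rw [if_pos hsh, if_pos (by
          rw [shape_iff]
          intro j hj
          rw [hsub j hj]
          exact (shape_iff i e).mp hsh j hj)]
        rw [hsubi]
        obtain ⟨m, hm⟩ : ∃ m, e i = m + 1 := ⟨e i - 1, by omega⟩
        rw [hm]
        simp [pow_succ]
      · rw [if_neg hsh, if_neg (by
          rw [shape_iff]
          intro hcon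
          apply hsh
          rw [shape_iff]
          intro j hj
          rw [← hsub j hj]
          exact hcon j hj)]
        simp

lemma inv_one_add_X (i : Fin k) :
    (1 + MvPowerSeries.X i : MvPowerSeries (Fin k) ℚ)⁻¹ = Sser k i := by
  rw [MvPowerSeries.inv_eq_iff_mul_eq_one, mul_comm]
  · exact one_add_X_mul_Sser i
  · simp

lemma X_mul_Sser (i : Fin k) :
    MvPowerSeries.X i * Sser k i = 1 - Sser k i := by
  have h := one_add_X_mul_Sser (k := k) i
  rw [add_mul, one_mul] at h
  linear_combination h

lemma coeff_mul_Sser (f : MvPowerSeries (Fin k) ℚ) (d : Fin k →₀ ℕ) (i : Fin k) :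
    MvPowerSeries.coeff d (f * Sser k i)
      = ∑ n ∈ Finset.range (d i + 1),
        (-1 : ℚ) ^ n * MvPowerSeries.coeff (d - Finsupp.single i n) f := by
  classical
  rw [MvPowerSeries.coeff_mul]
  rw [← Finset.sum_filter_of_ne (p := fun p : (Fin k →₀ ℕ) × (Fin k →₀ ℕ) =>
    p.2 = Finsupp.single i (p.2 i)) (by
      intro p _ hp
      by_contra hcon
      rw [coeff_Sser, if_neg hcon, mul_zero] at hp
      exact hp rfl)]
  refine Finset.sum_bij' (fun p _ => p.2 i)
    (fun n _ => ((d - Finsupp.single i n, Finsupp.single i n) :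
      (Fin k →₀ ℕ) × (Fin k →₀ ℕ))) ?_ ?_ ?_ ?_ ?_
  · intro p hp
    simp only [Finset.mem_filter, Finset.HasAntidiagonal.mem_antidiagonal] at hp
    have : p.1 i + p.2 i = d i := by
      rw [← Finsupp.add_apply, hp.1]
    simp only [Finset.mem_range]
    omega
  · intro n hn
    simp only [Finset.mem_range] at hn
    simp only [Finset.mem_filter, Finset.HasAntidiagonal.mem_antidiagonal]
    constructor
    · ext j
      rw [Finsupp.add_apply, Finsupp.tsub_apply, Finsupp.single_apply]
      split_ifs with h
      · subst h; omega
      · simp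
    · simp [Finsupp.single_apply]
  · intro p hp
    simp only [Finset.mem_filter, Finset.HasAntidiagonal.mem_antidiagonal] at hp
    have h2 : Finsupp.single i (p.2 i) = p.2 := hp.2.symm
    have h1 : d - p.2 = p.1 := by
      ext j
      rw [Finsupp.tsub_apply]
      have : p.1 j + p.2 j = d j := by rw [← Finsupp.add_apply, hp.1]
      omega
    show (d - Finsupp.single i (p.2 i), Finsupp.single i (p.2 i)) = p
    rw [h2, h1]
  · intro n hn
    simp [Finsupp.single_apply]
  · intro p hp
    simp only [Finset.mem_filter, Finset.HasAntidiagonal.mem_antidiagonal] at hp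
    rw [coeff_Sser, if_pos hp.2]
    have h2 : Finsupp.single i (p.2 i) = p.2 := hp.2.symm
    rw [h2]
    have h1 : d - p.2 = p.1 := by
      ext j
      rw [Finsupp.tsub_apply]
      have : p.1 j + p.2 j = d j := by rw [← Finsupp.add_apply, hp.1]
      omega
    rw [h1]
    ring

lemma NN_zero : NN k 0 = 1 := by
  haveI : Unique {w : List (Fin k) //
      List.Chain' (· ≠ ·) w ∧ ∀ i, w.count i = (0 : Fin k →₀ ℕ) i} := by
    refine ⟨⟨⟨[], List.isChain_nil, fun i => by simp⟩⟩, ?_⟩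
    rintro ⟨w, hw⟩
    have hw0 : w = [] := by
      rw [List.eq_nil_iff_forall_not_mem]
      intro a ha
      exact List.count_eq_zero.mp (by simpa using hw.2 a) ha
    exact Subtype.ext hw0
  exact Nat.card_unique

lemma Bc_zero (i : Fin k) : Bc k 0 i = 1 := by
  haveI : Unique {w : List (Fin k) //
      (List.Chain' (· ≠ ·) w ∧ ∀ j, w.count j = (0 : Fin k →₀ ℕ) j) ∧
        w.head? ≠ some i} := by
    refine ⟨⟨⟨[], ⟨List.isChain_nil, fun j => by simp⟩, by simp⟩⟩, ?_⟩
    rintro ⟨w, hw⟩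
    have hw0 : w = [] := by
      rw [List.eq_nil_iff_forall_not_mem]
      intro a ha
      exact List.count_eq_zero.mp (by simpa using hw.1.2 a) ha
    exact Subtype.ext hw0
  exact Nat.card_unique

end CarlitzAux

/-- In `ℚ[[x_1,…,x_k]]`, if `C` is the series whose coefficient at `x_1^{d_1}⋯x_k^{d_k}`
counts the Carlitz words on `{1,…,k}` with letter `i` appearing `d i` times, then
`C · (1 − Σ_i x_i (1 + x_i)⁻¹) = 1`. -/
theorem stmt1 (k : ℕ) (hk : 1 ≤ k) (C : MvPowerSeries (Fin k) ℚ)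
    (hC : ∀ d : Fin k →₀ ℕ, MvPowerSeries.coeff d C =
      Nat.card {w : List (Fin k) // List.Chain' (· ≠ ·) w ∧ ∀ i, w.count i = d i}) :
    C * (1 - ∑ i, MvPowerSeries.X i * (1 + MvPowerSeries.X i)⁻¹) = 1 := by
  classical
  have hC' : ∀ d, MvPowerSeries.coeff d C = CarlitzAux.NN k d := hC
  have step1 : C * (1 - ∑ i, MvPowerSeries.X i * (1 + MvPowerSeries.X i)⁻¹)
      = C - ∑ i, (C - C * CarlitzAux.Sser k i) := by
    simp_rw [CarlitzAux.inv_one_add_X, CarlitzAux.X_mul_Sser]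
    rw [mul_sub, mul_one, Finset.mul_sum]
    congr 1
    refine Finset.sum_congr rfl fun i _ => ?_
    rw [mul_sub, mul_one]
  rw [step1]
  ext d
  rw [map_sub, map_sum]
  have hBc : ∀ i : Fin k, MvPowerSeries.coeff d (C * CarlitzAux.Sser k i)
      = (CarlitzAux.Bc k d i : ℚ) := by
    intro i
    rw [CarlitzAux.coeff_mul_Sser]
    simp_rw [hC']
    exact (CarlitzAux.Bc_formula (d i) d i rfl).symm
  have hsum : ∀ i : Fin k, MvPowerSeries.coeff d (C - C * CarlitzAux.Sser k i)
      = (CarlitzAux.NN k d : ℚ) - CarlitzAux.Bc k d i := by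
    intro i
    rw [map_sub, hBc i, hC']
  rw [Finset.sum_congr rfl fun i _ => hsum i, hC', MvPowerSeries.coeff_one]
  by_cases hd : d = 0
  · subst hd
    rw [if_pos rfl]
    simp [CarlitzAux.NN_zero, CarlitzAux.Bc_zero]
  · rw [if_neg hd]
    have hpart : ∀ i : Fin k, (CarlitzAux.NN k d : ℚ) - CarlitzAux.Bc k d i
        = (CarlitzAux.Hc k d i : ℚ) := by
      intro i
      rw [CarlitzAux.partition d i]
      push_cast
      ring
    rw [Finset.sum_congr rfl fun i _ => hpart i]
    rw [← Nat.cast_sum, ← CarlitzAux.NN_sum_Hc d hd]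
    ring
end

section
/- For every n ≥ 0, Σ_c l_{len(c)}(t) = t^n/n! in ℝ[t], where the sum is over all compositions c of n and len(c) is the number of parts of c (for n = 0 the only composition is the empty one, with l_0 = 1). -/
open Finset Polynomial

lemma key (m r : ℕ) (hr : r ≤ m) :
    ∑ j ∈ range (m+1), ((-1 : ℝ)) ^ (j - r) * (m.choose j) * (j.choose r)
      = if r = m then 1 else 0 := by
  have h1 : ∑ j ∈ range (m+1), ((-1 : ℝ)) ^ (j - r) * (m.choose j) * (j.choose r)
      = ∑ j ∈ Ico r (m+1), ((-1 : ℝ)) ^ (j - r) * (m.choose j) * (j.choose r) := by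
    rw [range_eq_Ico, ← Finset.sum_Ico_consecutive _ (Nat.zero_le r) (by omega)]
    have : ∑ j ∈ Ico 0 r, ((-1 : ℝ)) ^ (j - r) * (m.choose j) * (j.choose r) = 0 := by
      apply Finset.sum_eq_zero
      intro j hj
      rw [mem_Ico] at hj
      rw [Nat.choose_eq_zero_of_lt hj.2]
      simp
    rw [this, zero_add]
  rw [h1, Finset.sum_Ico_eq_sum_range]
  have h2 : ∀ d ∈ range (m + 1 - r), ((-1 : ℝ)) ^ (r + d - r) * (m.choose (r + d)) * ((r + d).choose r)
      = ((m.choose r : ℝ)) * ((-1 : ℝ)) ^ d * ((m - r).choose d) := by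
    intro d hd
    rw [mem_range] at hd
    have h3 : (m.choose (r + d)) * ((r + d).choose r) = m.choose r * ((m - r).choose d) := by
      have := Nat.choose_mul (n := m) (show r ≤ r + d by omega)
      simpa using this
    have h3' : ((m.choose (r + d) : ℝ)) * ((r + d).choose r)
        = ((m.choose r : ℝ)) * ((m - r).choose d) := by exact_mod_cast congrArg (Nat.cast (R := ℝ)) h3
    have h4 : r + d - r = d := by omega
    rw [h4]
    linear_combination ((-1 : ℝ)) ^ d * h3'
  rw [Finset.sum_congr rfl h2, show m + 1 - r = (m - r) + 1 by omega]
  have h6 : (∑ d ∈ range ((m - r) + 1), ((-1 : ℝ)) ^ d * ((m - r).choose d))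
      = if m - r = 0 then 1 else 0 := by
    split_ifs with h
    · rw [h]; simp
    · have h7 := Int.alternating_sum_range_choose_of_ne h
      have h8 := congrArg (fun z : ℤ => (z : ℝ)) h7
      push_cast at h8
      exact h8
  calc ∑ d ∈ range ((m - r) + 1), ((m.choose r : ℝ)) * ((-1 : ℝ)) ^ d * ((m - r).choose d)
      = (m.choose r : ℝ) * ∑ d ∈ range ((m - r) + 1), ((-1 : ℝ)) ^ d * ((m - r).choose d) := by
        rw [Finset.mul_sum]; exact Finset.sum_congr rfl fun d _ => by ring
    _ = if r = m then 1 else 0 := by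
        rw [h6]
        by_cases h : r = m
        · subst h; simp
        · rw [if_neg h, if_neg (by omega), mul_zero]

lemma lag_eq (m j : ℕ) (hj : j ≤ m) :
    lag (j+1) = ∑ i ∈ Icc 1 (m+1),
      C ((-1 : ℝ) ^ (j+1-i) * (j.choose (i-1)) / (i.factorial)) * X ^ i := by
  rw [lag, if_neg (Nat.succ_ne_zero j)]
  simp only [Nat.add_sub_cancel]
  refine Finset.sum_subset (Finset.Icc_subset_Icc le_rfl (by omega)) ?_
  intro i hi hni
  rw [mem_Icc] at hi hni
  have : j < i - 1 := by omega
  rw [Nat.choose_eq_zero_of_lt this]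
  simp

lemma lagsum (m : ℕ) :
    ∑ j ∈ range (m+1), (m.choose j : ℝ) • lag (j+1)
      = (((m+1).factorial : ℝ))⁻¹ • X ^ (m+1) := by
  have h1 : ∀ j ∈ range (m+1), (m.choose j : ℝ) • lag (j+1)
      = ∑ i ∈ Icc 1 (m+1),
          C ((m.choose j : ℝ) * ((-1 : ℝ) ^ (j+1-i) * (j.choose (i-1)) / (i.factorial))) * X ^ i := by
    intro j hj
    rw [mem_range] at hj
    rw [lag_eq m j (by omega), Finset.smul_sum]
    refine Finset.sum_congr rfl fun i _ => ?_
    rw [Polynomial.smul_eq_C_mul, ← mul_assoc, ← Polynomial.C_mul]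
  rw [Finset.sum_congr rfl h1, Finset.sum_comm]
  have h2 : ∀ i ∈ Icc 1 (m+1),
      ∑ j ∈ range (m+1),
          C ((m.choose j : ℝ) * ((-1 : ℝ) ^ (j+1-i) * (j.choose (i-1)) / (i.factorial))) * X ^ i
        = C (if i = m+1 then (((m+1).factorial : ℝ))⁻¹ else 0) * X ^ i := by
    intro i hi
    rw [mem_Icc] at hi
    rw [← Finset.sum_mul, ← map_sum]
    congr 2
    have h3 : ∑ j ∈ range (m+1),
        (m.choose j : ℝ) * ((-1 : ℝ) ^ (j+1-i) * (j.choose (i-1)) / (i.factorial))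
        = ((i.factorial : ℝ))⁻¹ *
            ∑ j ∈ range (m+1), ((-1 : ℝ)) ^ (j - (i-1)) * (m.choose j) * (j.choose (i-1)) := by
      rw [Finset.mul_sum]
      refine Finset.sum_congr rfl fun j _ => ?_
      rw [show j + 1 - i = j - (i-1) by omega]
      field_simp
    rw [h3, key m (i-1) (by omega)]
    by_cases h : i = m + 1
    · rw [if_pos (by omega), if_pos h, mul_one, h]
    · rw [if_neg (by omega), if_neg h, mul_zero]
  rw [Finset.sum_congr rfl h2, Finset.sum_eq_single (m+1)]
  · rw [if_pos rfl, ← Polynomial.smul_eq_C_mul]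
  · intro i _ hne
    rw [if_neg hne, map_zero, zero_mul]
  · intro h
    exact absurd (mem_Icc.2 ⟨by omega, le_rfl⟩) h

lemma lenS (m : ℕ) (s : Finset (Fin ((m+1) - 1))) :
    ((compositionAsSetEquiv (m+1)).symm s).length = s.card + 1 := by
  have hb : ((compositionAsSetEquiv (m+1)).symm s).boundaries
      = insert (0 : Fin (m+2)) (insert (Fin.last (m+1))
          (s.image (fun j : Fin ((m+1)-1) => (⟨(j : ℕ) + 1, by omega⟩ : Fin (m+2))))) := by
    ext i
    simp [compositionAsSetEquiv, Fin.ext_iff, -Fin.val_eq_zero_iff]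
    aesop
  have hcard : ((compositionAsSetEquiv (m+1)).symm s).boundaries.card = s.card + 2 := by
    rw [hb, Finset.card_insert_of_notMem, Finset.card_insert_of_notMem,
      Finset.card_image_of_injective]
    · intro a b hab
      simpa [Fin.ext_iff] using hab
    · simp only [Finset.mem_image, not_exists, Fin.ext_iff, Fin.val_last]
      intro j _
      have := j.2
      omega
    · simp only [Finset.mem_insert, Finset.mem_image, not_or, not_exists, Fin.ext_iff,
        Fin.val_zero, Fin.val_last]
      exact ⟨by omega, fun j _ => by omega⟩
  rw [CompositionAsSet.length, hcard]
  omega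

/-- For every `n ≥ 0`, `Σ_c l_{len(c)}(t) = t^n / n!`, where the sum is over all
compositions `c` of `n` and `len(c)` is the number of parts of `c`. -/
theorem stmt7 (n : ℕ) :
    ∑ c : Composition n, lag c.length =
      ((Nat.factorial n : ℝ))⁻¹ • Polynomial.X ^ n := by

  cases n with
  | zero =>
    have hlen : ∀ c : Composition 0, c.length = 0 :=
      fun c => Nat.le_zero.mp c.length_le
    have hcard : Fintype.card (Composition 0) = 1 := by
      rw [composition_card]
      norm_num
    calc ∑ c : Composition 0, lag c.length
        = ∑ _c : Composition 0, (1 : Polynomial ℝ) := by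
          refine Finset.sum_congr rfl fun c _ => ?_
          rw [hlen c, lag, if_pos rfl]
      _ = (Fintype.card (Composition 0)) • (1 : Polynomial ℝ) := by
          rw [Finset.sum_const, Finset.card_univ]
      _ = ((Nat.factorial 0 : ℝ))⁻¹ • Polynomial.X ^ 0 := by
          rw [hcard]
          simp
  | succ m =>
    set e := (compositionEquiv (m+1)).trans (compositionAsSetEquiv (m+1)) with he
    have hlen : ∀ c : Composition (m+1), c.length = (e c).card + 1 := by
      intro c
      have h1 := lenS m (e c)
      have h2 : (compositionAsSetEquiv (m+1)).symm (e c) = c.toCompositionAsSet := by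
        rw [he]
        exact Equiv.symm_apply_apply _ _
      rw [h2, c.toCompositionAsSet_length] at h1
      exact h1
    calc ∑ c : Composition (m+1), lag c.length
        = ∑ c : Composition (m+1), lag ((e c).card + 1) :=
          Finset.sum_congr rfl fun c _ => by rw [hlen c]
      _ = ∑ s : Finset (Fin ((m+1)-1)), lag (s.card + 1) :=
          Fintype.sum_equiv e _ _ (fun c => rfl)
      _ = ∑ s ∈ (Finset.univ : Finset (Fin ((m+1)-1))).powerset, lag (s.card + 1) := by
          rw [Finset.powerset_univ]
      _ = ∑ j ∈ range ((Finset.univ : Finset (Fin ((m+1)-1))).card + 1),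
            ((Finset.univ : Finset (Fin ((m+1)-1))).card.choose j) • lag (j + 1) :=
          Finset.sum_powerset_apply_card (fun k => lag (k + 1))
      _ = ∑ j ∈ range (m+1), (m.choose j : ℝ) • lag (j + 1) := by
          rw [Finset.card_univ, Fintype.card_fin]
          simp only [Nat.add_sub_cancel]
          exact Finset.sum_congr rfl fun j _ => (Nat.cast_smul_eq_nsmul ℝ _ _).symm
      _ = ((Nat.factorial (m+1) : ℝ))⁻¹ • Polynomial.X ^ (m+1) := lagsum m
end

section
/- Fix m ≥ 1. In the ring of formal power series in x over the polynomial ring ℚ[t], Σ_{n≥0} p_{m,n}(t) x^n = Σ_{j≥0} g^j/j!, where g = t·(x − x^m)·(1 − x^m)^{-1} (a series with zero constant coefficient, so the exponential sum is well-defined, and (1 − x^m)^{-1} is the inverse of the power series 1 − x^m). -/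
/-- The Laguerre-type polynomial `l_k(t)` over `ℚ`: `l_0 = 1` and for `k ≥ 1`,
`l_k(t) = Σ_{i=1}^{k} (−1)^{k−i} C(k−1, i−1) t^i / i!`. -/
noncomputable def lagQ (k : ℕ) : Polynomial ℚ :=
  if k = 0 then 1
  else ∑ i ∈ Finset.Icc 1 k,
    Polynomial.C ((-1 : ℚ) ^ (k - i) * (Nat.choose (k - 1) (i - 1)) / (Nat.factorial i)) *
      Polynomial.X ^ i

/-- `p_{m,n}(t) = Σ_c l_{len(c)}(t)`, summed over all compositions `c` of `n` each of whose
parts is at most `m − 1`. -/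
noncomputable def pPoly (m n : ℕ) : Polynomial ℚ :=
  ∑ c ∈ Finset.univ.filter (fun c : Composition n => ∀ i ∈ c.blocks, i ≤ m - 1),
    lagQ c.length

open PowerSeries Finset

noncomputable section

abbrev PQ := Polynomial ℚ

/-- u = X + X^2 + ... + X^(m-1) -/
def uu (m : ℕ) : PQ⟦X⟧ := ∑ i ∈ Finset.Ico 1 m, (PowerSeries.X : PQ⟦X⟧) ^ i

def ww (m : ℕ) : PQ⟦X⟧ :=
  (PowerSeries.X - PowerSeries.X ^ m) * PowerSeries.invOfUnit (1 - PowerSeries.X ^ m) 1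

lemma constantCoeff_uu (m : ℕ) : constantCoeff (R := PQ) (uu m) = 0 := by
  simp only [uu, map_sum, map_pow, constantCoeff_X]
  refine Finset.sum_eq_zero fun i hi => ?_
  rw [mem_Ico] at hi
  exact zero_pow (by omega)

lemma X_dvd_uu (m : ℕ) : (PowerSeries.X : PQ⟦X⟧) ∣ uu m :=
  PowerSeries.X_dvd_iff.mpr (constantCoeff_uu m)

lemma one_add_uu (m : ℕ) (hm : 1 ≤ m) :
    (1 : PQ⟦X⟧) + uu m = ∑ i ∈ Finset.range m, (PowerSeries.X : PQ⟦X⟧) ^ i := by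
  rw [Finset.range_eq_Ico, ← Finset.insert_Ico_add_one_left_eq_Ico (by omega : 0 < m),
    Finset.sum_insert (by simp), pow_zero, uu, zero_add]

lemma one_add_uu_mul (m : ℕ) (hm : 1 ≤ m) :
    ((1 : PQ⟦X⟧) + uu m) * (1 - PowerSeries.X) = 1 - PowerSeries.X ^ m := by
  have := geom_sum_mul (PowerSeries.X : PQ⟦X⟧) m
  rw [one_add_uu m hm]
  linear_combination -this

lemma uu_mul (m : ℕ) (hm : 1 ≤ m) :
    uu m * (1 - PowerSeries.X) = PowerSeries.X - PowerSeries.X ^ m := by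
  have h := one_add_uu_mul m hm
  have : uu m = (1 + uu m) - 1 := by ring
  rw [this, sub_mul, h]
  ring

lemma constantCoeff_one_sub_Xm (m : ℕ) (hm : 1 ≤ m) :
    constantCoeff (R := PQ) (1 - PowerSeries.X ^ m) = 1 := by
  simp only [map_sub, map_one, map_pow, constantCoeff_X, zero_pow (by omega : m ≠ 0), sub_zero]

lemma inv_mul_one_sub_Xm (m : ℕ) (hm : 1 ≤ m) :
    (1 - PowerSeries.X ^ m) * PowerSeries.invOfUnit (1 - PowerSeries.X ^ m) (1 : PQˣ) = 1 :=
  PowerSeries.mul_invOfUnit _ _ (by rw [constantCoeff_one_sub_Xm m hm]; rfl)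

lemma one_sub_Xm_ne_zero (m : ℕ) (hm : 1 ≤ m) : (1 - PowerSeries.X ^ m : PQ⟦X⟧) ≠ 0 := by
  intro h
  have := constantCoeff_one_sub_Xm m hm
  rw [h, map_zero] at this
  exact one_ne_zero this.symm

lemma ww_mul_one_add_uu (m : ℕ) (hm : 1 ≤ m) : ww m * (1 + uu m) = uu m := by
  apply mul_right_cancel₀ (one_sub_Xm_ne_zero m hm)
  have h1 := inv_mul_one_sub_Xm m hm
  have h2 := one_add_uu_mul m hm
  have h3 := uu_mul m hm
  calc ww m * (1 + uu m) * (1 - PowerSeries.X ^ m)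
      = ((1 - PowerSeries.X ^ m) * PowerSeries.invOfUnit (1 - PowerSeries.X ^ m) 1) *
        ((PowerSeries.X - PowerSeries.X ^ m) * (1 + uu m)) := by rw [ww]; ring
    _ = (PowerSeries.X - PowerSeries.X ^ m) * (1 + uu m) := by rw [h1, one_mul]
    _ = uu m * ((1 + uu m) * (1 - PowerSeries.X)) := by rw [← h3]; ring
    _ = uu m * (1 - PowerSeries.X ^ m) := by rw [h2]

lemma isUnit_one_add_uu (m : ℕ) : IsUnit ((1 : PQ⟦X⟧) + uu m) := by
  rw [PowerSeries.isUnit_iff_constantCoeff, map_add, map_one, constantCoeff_uu, add_zero]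
  exact isUnit_one

end

noncomputable section
open PowerSeries Finset

def cS (i k : ℕ) : ℚ := (-1 : ℚ) ^ (k - i) * ((k - 1).choose (i - 1))

def Sser (m N i : ℕ) : PQ⟦X⟧ := ∑ k ∈ Finset.Icc i N, cS i k • uu m ^ k

lemma Sser_succ_top (m N i : ℕ) (h : i ≤ N + 1) :
    Sser m (N + 1) i = Sser m N i + cS i (N + 1) • uu m ^ (N + 1) := by
  rw [Sser, Sser, ← Finset.insert_Icc_right_eq_Icc_add_one h, Finset.sum_insert (by simp)]
  ring

lemma Sser_empty (m N i : ℕ) (h : N < i) : Sser m N i = 0 := by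
  rw [Sser, Finset.Icc_eq_empty (by omega), Finset.sum_empty]

lemma L1 (m : ℕ) : ∀ N : ℕ, Sser m N 1 * (1 + uu m) =
    uu m - ((-1 : ℚ) ^ N) • uu m ^ (N + 1) := by
  intro N
  induction N with
  | zero =>
      rw [Sser_empty m 0 1 (by omega)]
      simp
  | succ N ih =>
      rw [Sser_succ_top m N 1 (by omega), add_mul, ih]
      have hc : cS 1 (N + 1) = (-1 : ℚ) ^ N := by
        simp [cS]
      rw [hc]
      have hp : ((-1 : ℚ) ^ (N + 1)) = (-1 : ℚ) ^ N * (-1) := by ring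
      rw [hp]
      simp only [Algebra.smul_def, map_mul, map_pow, map_neg, map_one]
      ring

lemma L2 (m : ℕ) (i : ℕ) : ∀ N : ℕ, Sser m N (i + 2) * (1 + uu m) =
    Sser m N (i + 1) * uu m -
      ((-1 : ℚ) ^ (N - (i + 1)) * ((N.choose (i + 1) : ℚ))) • uu m ^ (N + 1) := by
  intro N
  induction N with
  | zero =>
      rw [Sser_empty m 0 (i+2) (by omega), Sser_empty m 0 (i+1) (by omega)]
      simp [Nat.choose_eq_zero_of_lt (by omega : 0 < i + 1)]
  | succ N ih =>
      by_cases hiN : i + 1 ≤ N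
      · -- main case
        rw [Sser_succ_top m N (i+2) (by omega), Sser_succ_top m N (i+1) (by omega),
          add_mul, add_mul, ih]
        have e1 : cS (i+2) (N+1) = (-1 : ℚ) ^ (N - (i+1)) * ((N.choose (i+1) : ℚ)) := by
          simp only [cS, Nat.succ_sub_succ, Nat.add_sub_cancel, Nat.sub_zero]
        have e2 : cS (i+1) (N+1) = (-1 : ℚ) ^ (N - (i+1)) * (-1) * ((N.choose i : ℚ)) := by
          simp only [cS]
          have : N + 1 - (i + 1) = (N - (i+1)) + 1 := by omega
          rw [this, pow_succ]
          norm_num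
        have e3 : ((-1 : ℚ) ^ (N + 1 - (i + 1)) * (((N+1).choose (i + 1) : ℚ)))
            = (-1 : ℚ) ^ (N - (i+1)) * (-1) * ((N.choose i : ℚ) + (N.choose (i+1) : ℚ)) := by
          have h1 : N + 1 - (i + 1) = (N - (i+1)) + 1 := by omega
          rw [h1, pow_succ, Nat.choose_succ_succ]
          push_cast
          ring
        rw [e1, e2, e3]
        simp only [Algebra.smul_def, map_mul, map_pow, map_neg, map_one, map_add, map_natCast]
        ring
      · -- degenerate cases: i ≥ N
        rw [Sser_empty m (N+1) (i+2) (by omega)]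
        by_cases hiN2 : i = N
        · subst hiN2
          rw [Sser_succ_top m i (i+1) (by omega), Sser_empty m i (i+1) (by omega)]
          have hc : cS (i+1) (i+1) = 1 := by simp [cS]
          have hc2 : ((-1 : ℚ) ^ (i + 1 - (i + 1)) * (((i+1).choose (i + 1) : ℚ))) = 1 := by
            simp
          rw [hc, hc2, one_smul, one_smul]
          rw [zero_mul, zero_add, ← pow_succ]
          ring
        · rw [Sser_empty m (N+1) (i+1) (by omega),
            Nat.choose_eq_zero_of_lt (by omega : N + 1 < i + 1)]
          simp

end

noncomputable section
open PowerSeries Finset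

lemma X_pow_dvd_smul {f g : PQ⟦X⟧} (q : ℚ) (h : f ∣ g) : f ∣ q • g := by
  rw [Algebra.smul_def]
  exact Dvd.dvd.mul_left h _

lemma cancel_unit {N : ℕ} {m : ℕ} {f : PQ⟦X⟧}
    (h : (PowerSeries.X : PQ⟦X⟧) ^ (N+1) ∣ f * (1 + uu m)) :
    (PowerSeries.X : PQ⟦X⟧) ^ (N+1) ∣ f := by
  obtain ⟨v, hv⟩ := isUnit_one_add_uu m
  rw [← hv] at h
  exact (Units.dvd_mul_right).mp h

lemma keyDvd (m N : ℕ) (hm : 1 ≤ m) :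
    ∀ i : ℕ, 1 ≤ i → (PowerSeries.X : PQ⟦X⟧) ^ (N+1) ∣ Sser m N i - ww m ^ i := by
  have hXu : (PowerSeries.X : PQ⟦X⟧) ^ (N+1) ∣ uu m ^ (N+1) :=
    pow_dvd_pow_of_dvd (X_dvd_uu m) _
  intro i
  induction i with
  | zero => omega
  | succ j ih =>
    intro _
    rcases Nat.eq_zero_or_pos j with hj | hj
    · subst hj
      apply cancel_unit (m := m)
      have expand : (Sser m N 1 - ww m ^ 1) * (1 + uu m)
          = - (((-1 : ℚ) ^ N) • uu m ^ (N + 1)) := by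
        rw [sub_mul, L1 m N, pow_one, ww_mul_one_add_uu m hm]
        ring
      rw [expand]
      exact (X_pow_dvd_smul _ hXu).neg_right
    · obtain ⟨i, rfl⟩ : ∃ i, j = i + 1 := ⟨j - 1, by omega⟩
      apply cancel_unit (m := m)
      have expand : (Sser m N (i + 2) - ww m ^ (i + 2)) * (1 + uu m)
          = (Sser m N (i+1) - ww m ^ (i+1)) * uu m
            - ((-1 : ℚ) ^ (N - (i + 1)) * ((N.choose (i + 1) : ℚ))) • uu m ^ (N + 1) := by
        have hw : ww m ^ (i + 2) * (1 + uu m) = ww m ^ (i+1) * uu m := by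
          have : ww m ^ (i + 2) * (1 + uu m) = ww m ^ (i+1) * (ww m * (1 + uu m)) := by ring
          rw [this, ww_mul_one_add_uu m hm]
        rw [sub_mul, L2 m i N, hw]
        ring
      rw [expand]
      exact dvd_sub ((ih hj).mul_right _) (X_pow_dvd_smul _ hXu)

lemma coeff_eq_of_dvd {N : ℕ} {f g : PQ⟦X⟧}
    (h : (PowerSeries.X : PQ⟦X⟧) ^ (N+1) ∣ f - g) :
    PowerSeries.coeff (R := PQ) N f = PowerSeries.coeff (R := PQ) N g := by
  have := (PowerSeries.X_pow_dvd_iff.mp h) N (by omega)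
  rw [map_sub, sub_eq_zero] at this
  exact this

lemma coeff_ww_pow (m N : ℕ) (hm : 1 ≤ m) (i : ℕ) (hi : 1 ≤ i) :
    PowerSeries.coeff (R := PQ) N (ww m ^ i)
      = ∑ k ∈ Finset.Icc i N, cS i k • PowerSeries.coeff (R := PQ) N (uu m ^ k) := by
  have h := coeff_eq_of_dvd (keyDvd m N hm i hi)
  rw [← h, Sser, map_sum]
  exact Finset.sum_congr rfl fun k _ => by rw [PowerSeries.coeff_smul]

end

noncomputable section
open PowerSeries Finset

/-- number of lists of length `k` of entries in `[1, m-1]` with sum `n` -/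
def cf (m : ℕ) : ℕ → ℕ → ℕ
  | 0, n => if n = 0 then 1 else 0
  | (k+1), n => ∑ a ∈ Finset.Ico 1 m, if a ≤ n then cf m k (n - a) else 0

lemma coeff_uu (m n : ℕ) :
    PowerSeries.coeff (R := PQ) n (uu m) = if n ∈ Finset.Ico 1 m then 1 else 0 := by
  rw [uu, map_sum]
  simp only [PowerSeries.coeff_X_pow]
  rw [Finset.sum_ite_eq (Finset.Ico 1 m) n (fun _ => (1 : PQ))]

lemma coeff_uu_pow (m : ℕ) : ∀ k n : ℕ,
    PowerSeries.coeff (R := PQ) n (uu m ^ k) = (cf m k n : PQ) := by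
  intro k
  induction k with
  | zero =>
      intro n
      simp only [pow_zero, PowerSeries.coeff_one, cf]
      split <;> simp
  | succ k ih =>
      intro n
      rw [pow_succ, mul_comm, PowerSeries.coeff_mul,
        Finset.Nat.sum_antidiagonal_eq_sum_range_succ_mk]
      simp only [coeff_uu, ih]
      have lhs_eq : ∑ i ∈ Finset.range (n+1),
          (if i ∈ Finset.Ico 1 m then (1:PQ) else 0) * (cf m k (n - i) : PQ)
          = ∑ i ∈ (Finset.range (n+1)).filter (fun i => i ∈ Finset.Ico 1 m),
              (cf m k (n - i) : PQ) := by
        rw [Finset.sum_filter]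
        exact Finset.sum_congr rfl fun i _ => by split <;> simp
      rw [lhs_eq]
      have rhs_eq : ((∑ a ∈ Finset.Ico 1 m, if a ≤ n then cf m k (n - a) else 0 : ℕ) : PQ)
          = ∑ a ∈ (Finset.Ico 1 m).filter (fun a => a ≤ n), (cf m k (n - a) : PQ) := by
        rw [Nat.cast_sum, Finset.sum_filter]
        exact Finset.sum_congr rfl fun i _ => by split <;> simp
      rw [show (cf m (k+1) n : PQ)
          = ((∑ a ∈ Finset.Ico 1 m, if a ≤ n then cf m k (n - a) else 0 : ℕ) : PQ) from rfl,
        rhs_eq]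
      apply Finset.sum_congr _ fun i _ => rfl
      ext a
      simp only [Finset.mem_filter, Finset.mem_range, Finset.mem_Ico]
      omega

end

noncomputable section
open PowerSeries Finset

def cnt (m k n : ℕ) : ℕ :=
  (Finset.univ.filter
    (fun c : Composition n => c.length = k ∧ ∀ i ∈ c.blocks, i ≤ m - 1)).card

lemma blocks_eq_nil_of_zero (c : Composition 0) : c.blocks = [] := by
  have hsum := c.blocks_sum
  rcases hb : c.blocks with _ | ⟨a, l⟩
  · rfl
  · exfalso
    have ha : 0 < a := c.blocks_pos (by rw [hb]; exact List.mem_cons_self)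
    rw [hb] at hsum
    simp only [List.sum_cons] at hsum
    omega

/-- tail of a composition, as a composition -/
def compTail {n : ℕ} (c : Composition n) : Composition (n - c.blocks.head!) where
  blocks := c.blocks.tail
  blocks_pos := fun hi => c.blocks_pos (List.mem_of_mem_tail hi)
  blocks_sum := by
    have hsum := c.blocks_sum
    rcases hb : c.blocks with _ | ⟨a, l⟩
    · rw [hb] at hsum
      simp only [List.sum_nil] at hsum
      simp [hb, ← hsum]
    · rw [hb] at hsum
      simp only [List.sum_cons] at hsum
      simp only [hb, List.head!_cons, List.tail_cons]
      omega

/-- cons of a composition -/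
def compCons {n : ℕ} (a : ℕ) (ha : 1 ≤ a) (han : a ≤ n) (c : Composition (n - a)) :
    Composition n where
  blocks := a :: c.blocks
  blocks_pos := by
    intro i hi
    rcases List.mem_cons.mp hi with rfl | hi
    · omega
    · exact c.blocks_pos hi
  blocks_sum := by
    have := c.blocks_sum
    simp only [List.sum_cons, this]
    omega

lemma cnt_eq_cf (m : ℕ) : ∀ k n : ℕ, cnt m k n = cf m k n := by
  intro k
  induction k with
  | zero =>
      intro n
      rcases Nat.eq_zero_or_pos n with rfl | hn
      · rw [cnt, cf]
        simp only [if_pos rfl]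
        have huniv : (Finset.univ.filter
            (fun c : Composition 0 => c.length = 0 ∧ ∀ i ∈ c.blocks, i ≤ m - 1))
            = Finset.univ := by
          apply Finset.filter_true_of_mem
          intro c _
          constructor
          · rw [Composition.length, blocks_eq_nil_of_zero c]; rfl
          · intro i hi
            rw [blocks_eq_nil_of_zero c] at hi
            exact absurd hi (List.not_mem_nil)
        rw [huniv, Finset.card_univ, composition_card]
        norm_num
      · rw [cnt, cf]
        rw [if_neg (by omega)]
        rw [Finset.card_eq_zero, Finset.filter_eq_empty_iff]
        rintro c - ⟨hlen, -⟩
        have hb : c.blocks = [] := List.length_eq_zero_iff.mp hlen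
        have := c.blocks_sum
        rw [hb] at this
        simp at this
        omega
  | succ k ih =>
      intro n
      -- RHS as a card of a sigma finset
      have rhs_eq : cf m (k+1) n
          = (((Finset.Ico 1 m).filter (· ≤ n)).sigma
              (fun a => (Finset.univ.filter
                (fun c : Composition (n - a) =>
                  c.length = k ∧ ∀ i ∈ c.blocks, i ≤ m - 1)))).card := by
        rw [Finset.card_sigma, cf, Finset.sum_filter]
        apply Finset.sum_congr rfl
        intro a _
        split
        · exact (ih _).symm
        · rfl
      rw [rhs_eq, cnt]
      refine Finset.card_bij'
        (fun c hc => (⟨c.blocks.head!, compTail c⟩ :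
          (a : ℕ) × Composition (n - a)))
        (fun b hb => compCons b.1
          (by simp only [Finset.mem_sigma, Finset.mem_filter, Finset.mem_Ico] at hb; omega)
          (by simp only [Finset.mem_sigma, Finset.mem_filter, Finset.mem_Ico] at hb; omega)
          b.2) ?_ ?_ ?_ ?_
      · -- hi : maps into sigma set
        intro c hc
        simp only [Finset.mem_filter, Finset.mem_univ, true_and] at hc
        obtain ⟨hlen, hbd⟩ := hc
        have hne : c.blocks ≠ [] := by
          intro h
          rw [Composition.length, h] at hlen
          simp at hlen
        have hmem : c.blocks.head! ∈ c.blocks := List.head!_mem_self hne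
        have hpos : 0 < c.blocks.head! := c.blocks_pos hmem
        have hle : c.blocks.head! ≤ m - 1 := hbd _ hmem
        have hsumle : c.blocks.head! ≤ n := by
          have hsum := c.blocks_sum
          rw [← List.cons_head!_tail hne] at hsum
          simp only [List.sum_cons] at hsum
          omega
        simp only [Finset.mem_sigma, Finset.mem_filter, Finset.mem_Ico, Finset.mem_univ,
          true_and]
        refine ⟨⟨⟨hpos, by omega⟩, hsumle⟩, ?_, ?_⟩
        · show c.blocks.tail.length = k
          have : c.blocks.length = k + 1 := hlen
          rw [← List.cons_head!_tail hne] at this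
          simpa using this
        · intro i hi
          exact hbd i (List.mem_of_mem_tail hi)
      · -- hj : maps into composition set
        intro b hb
        simp only [Finset.mem_sigma, Finset.mem_filter, Finset.mem_Ico, Finset.mem_univ,
          true_and] at hb
        obtain ⟨⟨⟨h1, h2⟩, h3⟩, hlen, hbd⟩ := hb
        simp only [Finset.mem_filter, Finset.mem_univ, true_and]
        constructor
        · show (b.1 :: b.2.blocks).length = k + 1
          simp [hlen]
        · intro i hi
          rcases List.mem_cons.mp hi with rfl | hi
          · omega
          · exact hbd i hi
      · -- left inverse
        intro c hc
        simp only [Finset.mem_filter, Finset.mem_univ, true_and] at hc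
        have hne : c.blocks ≠ [] := by
          intro h
          rw [Composition.length, h] at hc
          simp at hc
        apply Composition.ext
        show c.blocks.head! :: c.blocks.tail = c.blocks
        exact List.cons_head!_tail hne
      · -- right inverse
        intro b hb
        rfl

noncomputable section
open PowerSeries Finset

lemma pPoly_eq (m n : ℕ) :
    pPoly m n = ∑ k ∈ Finset.range (n + 1), (cnt m k n : PQ) * lagQ k := by
  rw [pPoly]
  rw [← Finset.sum_fiberwise_of_maps_to
    (g := fun c : Composition n => c.length)
    (t := Finset.range (n + 1))
    (fun c _ => Finset.mem_range.mpr (Nat.lt_succ_of_le c.length_le))]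
  apply Finset.sum_congr rfl
  intro k _
  rw [Finset.filter_filter]
  calc ∑ c ∈ Finset.univ.filter
        (fun c : Composition n => (∀ i ∈ c.blocks, i ≤ m - 1) ∧ c.length = k), lagQ c.length
      = ∑ c ∈ Finset.univ.filter
        (fun c : Composition n => (∀ i ∈ c.blocks, i ≤ m - 1) ∧ c.length = k), lagQ k := by
        apply Finset.sum_congr rfl
        intro c hc
        rw [(Finset.mem_filter.mp hc).2.2]
    _ = (cnt m k n : PQ) * lagQ k := by
        rw [Finset.sum_const, cnt]
        rw [nsmul_eq_mul]
        congr 2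
        congr 1
        apply Finset.filter_congr
        intro c _
        tauto

lemma sum_split (N : ℕ) (f : ℕ → PQ) :
    ∑ k ∈ Finset.range (N + 1), f k = f 0 + ∑ k ∈ Finset.Icc 1 N, f k := by
  rw [Finset.range_eq_Ico, Finset.Ico_add_one_right_eq_Icc,
    ← Finset.insert_Icc_add_one_left_eq_Icc (Nat.zero_le N), Finset.sum_insert (by simp), zero_add]

/-- In `(ℚ[t])[[x]]`: `Σ_{n≥0} p_{m,n}(t) x^n = Σ_{j≥0} g^j / j!` where
`g = t·(x − x^m)·(1 − x^m)⁻¹` has zero constant coefficient, so the exponential sum is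
well-defined coefficientwise; the exponential sum is encoded coefficientwise, using that
the coefficient of `x^N` in `g^j` vanishes for `j > N`. -/
theorem stmt8 (m : ℕ) (hm : 1 ≤ m) :
    PowerSeries.mk (fun n => pPoly m n) =
      PowerSeries.mk (fun N => ∑ j ∈ Finset.range (N + 1),
        PowerSeries.coeff (R := Polynomial ℚ) N
          ((Nat.factorial j : ℚ)⁻¹ •
            (PowerSeries.C (R := Polynomial ℚ) Polynomial.X *
              (PowerSeries.X - PowerSeries.X ^ m) *
              PowerSeries.invOfUnit (1 - PowerSeries.X ^ m) 1) ^ j)) := by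
  refine PowerSeries.ext fun N => ?_
  rw [PowerSeries.coeff_mk, PowerSeries.coeff_mk]
  -- rewrite RHS terms
  have hg : (PowerSeries.C (R := PQ) Polynomial.X *
      (PowerSeries.X - PowerSeries.X ^ m) *
      PowerSeries.invOfUnit (1 - PowerSeries.X ^ m) 1) =
      PowerSeries.C (R := PQ) Polynomial.X * ww m := by
    rw [ww, mul_assoc]
  have hterm : ∀ j : ℕ,
      PowerSeries.coeff (R := PQ) N
          ((Nat.factorial j : ℚ)⁻¹ •
            (PowerSeries.C (R := PQ) Polynomial.X *
              (PowerSeries.X - PowerSeries.X ^ m) *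
              PowerSeries.invOfUnit (1 - PowerSeries.X ^ m) 1) ^ j)
        = (Nat.factorial j : ℚ)⁻¹ •
            (Polynomial.X ^ j * PowerSeries.coeff (R := PQ) N (ww m ^ j)) := by
    intro j
    rw [hg, PowerSeries.coeff_smul, mul_pow, ← map_pow, PowerSeries.coeff_C_mul]
  rw [Finset.sum_congr rfl (fun j _ => hterm j)]
  -- rewrite LHS
  rw [pPoly_eq m N]
  rw [Finset.sum_congr rfl (fun k _ => by
    rw [cnt_eq_cf, ← coeff_uu_pow m k N] :
      ∀ k ∈ Finset.range (N+1), (cnt m k N : PQ) * lagQ k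
        = PowerSeries.coeff (R := PQ) N (uu m ^ k) * lagQ k)]
  rw [sum_split, sum_split]
  have hconst : PowerSeries.coeff (R := PQ) N (uu m ^ 0) * lagQ 0
      = (Nat.factorial 0 : ℚ)⁻¹ • (Polynomial.X ^ 0 * PowerSeries.coeff (R := PQ) N (ww m ^ 0)) := by
    simp [lagQ]
  rw [hconst]
  refine congrArg (HAdd.hAdd ((Nat.factorial 0 : ℚ)⁻¹ • (Polynomial.X ^ 0 * PowerSeries.coeff (R := PQ) N (ww m ^ 0)))) ?_
  have hlag : ∀ k ∈ Finset.Icc 1 N,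
      PowerSeries.coeff (R := PQ) N (uu m ^ k) * lagQ k
        = ∑ i ∈ Finset.Icc 1 k, PowerSeries.coeff (R := PQ) N (uu m ^ k) *
            (Polynomial.C ((-1 : ℚ) ^ (k - i) * (Nat.choose (k - 1) (i - 1)) /
                (Nat.factorial i)) * Polynomial.X ^ i) := by
    intro k hk
    rw [lagQ, if_neg (by rw [Finset.mem_Icc] at hk; omega), Finset.mul_sum]
  rw [Finset.sum_congr rfl hlag]
  have hswap := Finset.sum_Ico_Ico_comm 1 (N + 1)
    (fun i k => (PowerSeries.coeff (R := PQ) N (uu m ^ k) *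
      (Polynomial.C ((-1 : ℚ) ^ (k - i) * (Nat.choose (k - 1) (i - 1)) /
          (Nat.factorial i)) * Polynomial.X ^ i)))
  rw [show Finset.Icc 1 N = Finset.Ico 1 (N+1) from (Finset.Ico_add_one_right_eq_Icc ..).symm]
  rw [Finset.sum_congr rfl (fun x _ => by
    rw [show Finset.Icc 1 x = Finset.Ico 1 (x+1) from (Finset.Ico_add_one_right_eq_Icc ..).symm] :
      ∀ x ∈ Finset.Ico 1 (N+1),
        (∑ i ∈ Finset.Icc 1 x, PowerSeries.coeff (R := PQ) N (uu m ^ x) *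
          (Polynomial.C ((-1 : ℚ) ^ (x - i) * (Nat.choose (x - 1) (i - 1)) /
              (Nat.factorial i)) * Polynomial.X ^ i))
        = ∑ i ∈ Finset.Ico 1 (x+1), PowerSeries.coeff (R := PQ) N (uu m ^ x) *
          (Polynomial.C ((-1 : ℚ) ^ (x - i) * (Nat.choose (x - 1) (i - 1)) /
              (Nat.factorial i)) * Polynomial.X ^ i)), ← hswap]
  apply Finset.sum_congr rfl
  intro i hi
  rw [Finset.Ico_add_one_right_eq_Icc] at hi
  rw [Finset.mem_Icc] at hi
  rw [coeff_ww_pow m N hm i hi.1, Finset.mul_sum, Finset.smul_sum]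
  rw [show Finset.Ico i (N+1) = Finset.Icc i N from Finset.Ico_add_one_right_eq_Icc ..]
  apply Finset.sum_congr rfl
  intro k hk
  rw [Finset.mem_Icc] at hk
  rw [cS, Polynomial.smul_eq_C_mul, Polynomial.smul_eq_C_mul]
  rw [show ((-1 : ℚ) ^ (k - i) * (Nat.choose (k - 1) (i - 1)) / (Nat.factorial i))
      = (Nat.factorial i : ℚ)⁻¹ * ((-1 : ℚ) ^ (k - i) * (Nat.choose (k - 1) (i - 1)))
      from by field_simp]
  rw [Polynomial.C_mul]
  ring

end
end
end

section
/- Fix integers k ≥ 1 and m ≥ 1. In the ring of multivariate formal power series over ℚ in x_1, …, x_k, let C be the series whose coefficient at x_1^{d_1}⋯x_k^{d_k} is the number of m-Carlitz words on {1,…,k} in which letter i appears exactly d_i times. Then (1 − Σ_{i=1}^k (x_i − x_i^m)·(1 − x_i^m)^{-1}) · C = 1, where (1 − x_i^m)^{-1} is the inverse of the power series 1 − x_i^m. -/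
namespace Stmt11

variable {k : ℕ}

/-- no `m` consecutive equal letters -/
abbrev Car (m : ℕ) (w : List (Fin k)) : Prop := ∀ i : Fin k, ¬ (List.replicate m i <:+: w)

lemma car_nil {m : ℕ} (hm : 1 ≤ m) : Car m ([] : List (Fin k)) := by
  intro i hi
  have := List.eq_nil_of_infix_nil hi
  rw [List.replicate_eq_nil_iff] at this
  omega

lemma replicate_eq_cons {m : ℕ} (hm : 1 ≤ m) (a : Fin k) :
    List.replicate m a = a :: List.replicate (m - 1) a := by
  conv_lhs => rw [← Nat.succ_pred_eq_of_pos hm]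
  rw [List.replicate_succ]; rfl

lemma car_cons {m : ℕ} (hm : 1 ≤ m) {a : Fin k} {w : List (Fin k)} :
    Car m (a :: w) ↔ Car m w ∧ ¬ (List.replicate (m - 1) a <+: w) := by
  constructor
  · intro h
    refine ⟨fun i hi => h i (hi.trans (List.infix_cons (List.infix_refl w))), fun hp => h a ?_⟩
    rw [replicate_eq_cons hm]
    exact (List.cons_prefix_cons.mpr ⟨rfl, hp⟩).isInfix
  · rintro ⟨hc, hp⟩ i hi
    rcases List.infix_cons_iff.mp hi with h | h
    · rw [replicate_eq_cons hm] at h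
      obtain ⟨rfl, h2⟩ := List.cons_prefix_cons.mp h
      exact hp h2
    · exact hc i h

lemma not_replicate_prefix {i : Fin k} {v : List (Fin k)} (hv : v.head? ≠ some i) :
    ∀ t s : ℕ, t < s → ¬ (List.replicate s i <+: List.replicate t i ++ v) := by
  intro t
  induction t generalizing v with
  | zero =>
    intro s hs hp
    rw [Stmt11.replicate_eq_cons hs] at hp; simp only [List.replicate_zero, List.nil_append] at hp
    cases v with
    | nil => exact absurd (List.eq_nil_of_prefix_nil hp) (by simp)
    | cons b v' =>
      obtain ⟨rfl, -⟩ := List.cons_prefix_cons.mp hp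
      simp at hv
  | succ t ih =>
    intro s hs hp
    obtain ⟨s, rfl⟩ : ∃ s', s = s' + 1 := ⟨s - 1, by omega⟩
    rw [List.replicate_succ, List.replicate_succ, List.cons_append] at hp
    obtain ⟨-, hp⟩ := List.cons_prefix_cons.mp hp
    exact ih hv s (by omega) hp


lemma car_replicate_append {m : ℕ} (hm : 1 ≤ m) {i : Fin k} {v : List (Fin k)}
    (hv : v.head? ≠ some i) :
    ∀ r : ℕ, r ≤ m - 1 → (Car m (List.replicate r i ++ v) ↔ Car m v) := by
  intro r
  induction r with
  | zero => simp
  | succ r ih =>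
    intro hr
    rw [List.replicate_succ, List.cons_append, car_cons hm,
      and_iff_left (not_replicate_prefix hv r (m - 1) (by omega))]
    exact ih (by omega)

lemma length_eq_sum {w : List (Fin k)} : w.length = ∑ i, w.count i := by
  induction w with
  | nil => simp
  | cons a t ih =>
    have : ∀ i : Fin k, (a :: t).count i = t.count i + if i = a then 1 else 0 := by
      intro i; rw [List.count_cons]; simp [eq_comm (a := i)]
    simp only [this, Finset.sum_add_distrib, List.length_cons, ih]
    simp

lemma finite_of_counts (d : Fin k →₀ ℕ) (P : List (Fin k) → Prop)
    (h : ∀ w, P w → ∀ i, w.count i = d i) : Finite {w : List (Fin k) // P w} := by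
  haveI : Finite {l : List (Fin k) // l.length = ∑ i, d i} :=
    (List.finite_length_eq (Fin k) (∑ i, d i)).to_subtype
  refine Finite.of_injective
    (fun w => (⟨w.1, by rw [length_eq_sum]; exact Finset.sum_congr rfl fun i _ => h w.1 w.2 i⟩ :
      {l : List (Fin k) // l.length = ∑ i, d i})) ?_
  intro a b hab
  exact Subtype.ext (congrArg Subtype.val hab :)


variable (m : ℕ)

/-- the counted predicate, verbatim from the theorem -/
def P (d : Fin k →₀ ℕ) (w : List (Fin k)) : Prop :=
  (∀ i, ¬ (List.replicate m i <:+: w)) ∧ ∀ i, w.count i = d i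

noncomputable def N (d : Fin k →₀ ℕ) : ℕ := Nat.card {w : List (Fin k) // P m d w}

noncomputable def Ni (i : Fin k) (d : Fin k →₀ ℕ) : ℕ :=
  Nat.card {w : List (Fin k) // P m d w ∧ w.head? = some i}

noncomputable def Ti (i : Fin k) (d : Fin k →₀ ℕ) : ℕ :=
  Nat.card {w : List (Fin k) // P m d w ∧ ¬ w.head? = some i}

variable {m}

lemma finite_P (d : Fin k →₀ ℕ) (Q : List (Fin k) → Prop) :
    Finite {w : List (Fin k) // P m d w ∧ Q w} :=
  finite_of_counts d _ (fun w hw i => hw.1.2 i)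

lemma finite_P' (d : Fin k →₀ ℕ) : Finite {w : List (Fin k) // P m d w} :=
  finite_of_counts d _ (fun w hw i => hw.2 i)

lemma nat_card_sigma {ι : Type*} [Fintype ι] (f : ι → Type*) [∀ i, Finite (f i)] :
    Nat.card (Σ i, f i) = ∑ i, Nat.card (f i) := by
  letI : ∀ i, Fintype (f i) := fun i => Fintype.ofFinite _
  simp [Nat.card_eq_fintype_card, Fintype.card_sigma]

lemma N_split (i : Fin k) (d : Fin k →₀ ℕ) : N m d = Ni m i d + Ti m i d := by
  classical
  haveI := finite_P' (m := m) d
  haveI := finite_P (m := m) d (fun w => w.head? = some i)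
  haveI := finite_P (m := m) d (fun w => ¬ w.head? = some i)
  have h1 := Nat.card_congr (Equiv.sumCompl (fun w : {w : List (Fin k) // P m d w} =>
    w.1.head? = some i))
  rw [Nat.card_sum] at h1
  have e1 : Nat.card {a : {w : List (Fin k) // P m d w} // a.1.head? = some i} = Ni m i d :=
    Nat.card_congr (Equiv.subtypeSubtypeEquivSubtypeInter (P m d) (fun w => w.head? = some i))
  have e2 : Nat.card {a : {w : List (Fin k) // P m d w} // ¬ a.1.head? = some i} = Ti m i d :=
    Nat.card_congr (Equiv.subtypeSubtypeEquivSubtypeInter (P m d) (fun w => ¬ w.head? = some i))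
  rw [e1, e2] at h1
  rw [N, ← h1]


lemma head_tail {w : List (Fin k)} {i : Fin k} (h : w.head? = some i) : w = i :: w.tail := by
  cases w <;> simp_all

lemma count_cons' (a b : Fin k) (t : List (Fin k)) :
    (a :: t).count b = t.count b + if b = a then 1 else 0 := by
  rw [List.count_cons]; simp [eq_comm (a := b)]

lemma sub_single_apply (d : Fin k →₀ ℕ) (i j : Fin k) (n : ℕ) :
    (d - Finsupp.single i n) j = d j - if j = i then n else 0 := by
  rw [Finsupp.tsub_apply, Finsupp.single_apply]
  simp [eq_comm (a := j)]

lemma Ni_eq_zero {i : Fin k} {d : Fin k →₀ ℕ} (h : d i = 0) : Ni m i d = 0 := by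
  rw [Ni]
  haveI : IsEmpty {w : List (Fin k) // P m d w ∧ w.head? = some i} := by
    refine ⟨fun w => ?_⟩
    obtain ⟨w, ⟨hcar, hcnt⟩, hh⟩ := w
    have hmem : i ∈ w := by rw [head_tail hh]; simp
    have := List.count_pos_iff.mpr hmem
    rw [hcnt i, h] at this
    omega
  exact Nat.card_of_isEmpty

lemma N_zero (hm : 1 ≤ m) : N m (0 : Fin k →₀ ℕ) = 1 := by
  rw [N]
  haveI : Unique {w : List (Fin k) // P m 0 w} := by
    refine ⟨⟨⟨[], car_nil hm, fun i => by simp⟩⟩, ?_⟩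
    rintro ⟨w, hcar, hcnt⟩
    have : w.length = 0 := by
      rw [length_eq_sum]
      exact Finset.sum_eq_zero fun i _ => by rw [hcnt i]; simp
    apply Subtype.ext
    simpa using List.length_eq_zero_iff.mp this
  exact Nat.card_unique

lemma Ni_card_eq (hm : 1 ≤ m) (i : Fin k) (d : Fin k →₀ ℕ) (hd : 1 ≤ d i) :
    Ni m i d = Nat.card {w' : List (Fin k) // P m (d - Finsupp.single i 1) w' ∧
      ¬ (List.replicate (m - 1) i <+: w')} := by
  apply Nat.card_congr
  refine ⟨fun w => ⟨w.1.tail, ?_⟩, fun w' => ⟨i :: w'.1, ?_⟩, ?_, ?_⟩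
  · obtain ⟨w, ⟨hcar, hcnt⟩, hh⟩ := w
    have hw : w = i :: w.tail := head_tail hh
    rw [hw] at hcar
    obtain ⟨hcar', hpre⟩ := (car_cons hm).mp hcar
    refine ⟨⟨hcar', fun j => ?_⟩, hpre⟩
    have := hcnt j
    rw [hw, count_cons' i j] at this
    rw [sub_single_apply]
    by_cases hji : j = i <;> simp [hji] at this ⊢ <;> omega
  · obtain ⟨w', ⟨hcar, hcnt⟩, hpre⟩ := w'
    refine ⟨⟨(car_cons hm).mpr ⟨hcar, hpre⟩, fun j => ?_⟩, rfl⟩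
    have := hcnt j
    rw [sub_single_apply] at this
    rw [count_cons' i j]
    by_cases hji : j = i <;> simp [hji] at this ⊢ <;> omega
  · rintro ⟨w, hw, hh⟩
    exact Subtype.ext (head_tail hh).symm
  · rintro ⟨w', hw'⟩
    rfl


lemma count_replicate_append (i j : Fin k) (r : ℕ) (v : List (Fin k)) :
    (List.replicate r i ++ v).count j = (if j = i then r else 0) + v.count j := by
  rw [List.count_append, List.count_replicate]
  simp [eq_comm (a := j)]

lemma B_card_eq (hm : 1 ≤ m) (i : Fin k) (d : Fin k →₀ ℕ) (hd : m ≤ d i) :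
    Nat.card {w' : List (Fin k) // P m (d - Finsupp.single i 1) w' ∧
      (List.replicate (m - 1) i <+: w')} = Ti m i (d - Finsupp.single i m) := by
  apply Nat.card_congr
  refine ⟨fun w' => ⟨w'.1.drop (m - 1), ?_⟩,
    fun v => ⟨List.replicate (m - 1) i ++ v.1, ?_⟩, ?_, ?_⟩
  · obtain ⟨w', ⟨hcar, hcnt⟩, hpre⟩ := w'
    have heq : w' = List.replicate (m - 1) i ++ w'.drop (m - 1) := by
      conv_lhs => rw [← List.take_append_drop (m - 1) w']
      congr 1
      have := List.prefix_iff_eq_take.mp hpre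
      rw [List.length_replicate] at this
      exact this.symm
    have hhead : ¬ (w'.drop (m - 1)).head? = some i := by
      intro hh
      have hv : w'.drop (m - 1) = i :: (w'.drop (m - 1)).tail := head_tail hh
      apply hcar i
      have : List.replicate m i <+: w' := by
        rw [heq, hv, replicate_eq_cons hm i]
        have h2 : (i :: List.replicate (m-1) i) = List.replicate (m-1) i ++ [i] := by
          rw [← List.replicate_succ, ← List.replicate_succ']
        rw [h2]
        exact ⟨(w'.drop (m - 1)).tail, by simp⟩
      exact this.isInfix
    have hcar' : ∀ j : Fin k, ¬ (List.replicate m j <:+: w'.drop (m - 1)) :=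
      fun j hj => hcar j (hj.trans (List.drop_suffix _ _).isInfix)
    refine ⟨⟨hcar', fun j => ?_⟩, hhead⟩
    have := hcnt j
    rw [heq, count_replicate_append] at this
    rw [sub_single_apply] at this ⊢
    by_cases hji : j = i <;> simp [hji] at this ⊢ <;> omega
  · obtain ⟨v, ⟨hcar, hcnt⟩, hh⟩ := v
    refine ⟨⟨(car_replicate_append hm hh (m - 1) le_rfl).mpr hcar, fun j => ?_⟩,
      List.prefix_append _ _⟩
    have := hcnt j
    rw [sub_single_apply] at this
    rw [count_replicate_append, sub_single_apply]
    by_cases hji : j = i <;> simp [hji] at this ⊢ <;> omega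
  · rintro ⟨w', ⟨hcar, hcnt⟩, hpre⟩
    apply Subtype.ext
    simp only
    conv_rhs => rw [← List.take_append_drop (m - 1) w']
    congr 1
    have := List.prefix_iff_eq_take.mp hpre
    rw [List.length_replicate] at this
    exact this
  · rintro ⟨v, hv⟩
    apply Subtype.ext
    simp only
    exact List.drop_left' List.length_replicate

lemma B_empty (hm : 1 ≤ m) (i : Fin k) (d : Fin k →₀ ℕ) (hd1 : 1 ≤ d i) (hd : d i < m) :
    Nat.card {w' : List (Fin k) // P m (d - Finsupp.single i 1) w' ∧
      (List.replicate (m - 1) i <+: w')} = 0 := by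
  haveI : IsEmpty {w' : List (Fin k) // P m (d - Finsupp.single i 1) w' ∧
      (List.replicate (m - 1) i <+: w')} := by
    refine ⟨fun w' => ?_⟩
    obtain ⟨w', ⟨hcar, hcnt⟩, hpre⟩ := w'
    have h1 : m - 1 ≤ w'.count i := by
      have := hpre.sublist.count_le i
      rw [List.count_replicate] at this
      simpa using this
    have := hcnt i
    rw [sub_single_apply] at this
    simp at this
    omega
  exact Nat.card_of_isEmpty


lemma N_split_pred (d : Fin k →₀ ℕ) (Q : List (Fin k) → Prop) :
    N m d = Nat.card {w : List (Fin k) // P m d w ∧ Q w} +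
      Nat.card {w : List (Fin k) // P m d w ∧ ¬ Q w} := by
  classical
  haveI := finite_P' (m := m) d
  haveI := finite_P (m := m) d Q
  haveI := finite_P (m := m) d (fun w => ¬ Q w)
  have h1 := Nat.card_congr (Equiv.sumCompl (fun w : {w : List (Fin k) // P m d w} => Q w.1))
  rw [Nat.card_sum] at h1
  have e1 : Nat.card {a : {w : List (Fin k) // P m d w} // Q a.1} =
      Nat.card {w : List (Fin k) // P m d w ∧ Q w} :=
    Nat.card_congr (Equiv.subtypeSubtypeEquivSubtypeInter (P m d) Q)
  have e2 : Nat.card {a : {w : List (Fin k) // P m d w} // ¬ Q a.1} =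
      Nat.card {w : List (Fin k) // P m d w ∧ ¬ Q w} :=
    Nat.card_congr (Equiv.subtypeSubtypeEquivSubtypeInter (P m d) (fun w => ¬ Q w))
  rw [e1, e2] at h1
  rw [N, ← h1]

lemma F2 (hm : 1 ≤ m) (i : Fin k) (d : Fin k →₀ ℕ) (hd1 : 1 ≤ d i) (hdm : d i < m) :
    Ni m i d = N m (d - Finsupp.single i 1) := by
  rw [Ni_card_eq hm i d hd1,
    N_split_pred (d - Finsupp.single i 1) (fun w => List.replicate (m - 1) i <+: w),
    B_empty hm i d hd1 hdm, zero_add]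

lemma F3 (hm : 1 ≤ m) (i : Fin k) (d : Fin k →₀ ℕ) (hd : m ≤ d i) :
    Ni m i d + N m (d - Finsupp.single i m) =
      N m (d - Finsupp.single i 1) + Ni m i (d - Finsupp.single i m) := by
  rw [Ni_card_eq hm i d (by omega),
    N_split_pred (d - Finsupp.single i 1) (fun w => List.replicate (m - 1) i <+: w),
    B_card_eq hm i d hd, N_split i (d - Finsupp.single i m)]
  ring

lemma F1 (hm : 1 ≤ m) (d : Fin k →₀ ℕ) :
    N m d = (if d = 0 then 1 else 0) + ∑ i, Ni m i d := by
  by_cases hd : d = 0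
  · subst hd
    rw [N_zero hm, if_pos rfl]
    have : ∀ i : Fin k, Ni m i 0 = 0 := fun i => Ni_eq_zero rfl
    simp [this]
  · rw [if_neg hd, zero_add]
    obtain ⟨j, hj⟩ := Finsupp.ne_iff.mp hd
    rw [Finsupp.coe_zero, Pi.zero_apply] at hj
    have hne : ∀ w : List (Fin k), P m d w → w ≠ [] := by
      rintro w hw rfl
      exact hj (by rw [← hw.2 j]; simp)
    haveI : ∀ i : Fin k, Finite {w : List (Fin k) // P m d w ∧ w.head? = some i} :=
      fun i => finite_P d _
    simp only [Ni]
    rw [N, ← nat_card_sigma (fun i : Fin k => {w : List (Fin k) // P m d w ∧ w.head? = some i})]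
    apply Nat.card_congr
    refine ⟨fun w => ⟨w.1.head (hne w.1 w.2), w.1, w.2, List.head?_eq_head _⟩,
      fun x => ⟨x.2.1, x.2.2.1⟩, fun w => rfl, ?_⟩
    rintro ⟨i, w, hw, hh⟩
    have hn : w ≠ [] := hne w hw
    have hhead : w.head hn = i := by
      have := List.head?_eq_head hn
      rw [hh] at this
      exact (Option.some.inj this).symm
    subst hhead
    rfl

end Stmt11

open Stmt11 MvPowerSeries in
/-- In `ℚ[[x_1,…,x_k]]`, if `C` is the series whose coefficient at `x_1^{d_1}⋯x_k^{d_k}`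
counts the `m`-Carlitz words on `{1,…,k}` (no `m` consecutive equal letters) with letter `i`
appearing exactly `d i` times, then `(1 − Σ_i (x_i − x_i^m)(1 − x_i^m)⁻¹) · C = 1`. -/
theorem stmt11 (k m : ℕ) (hk : 1 ≤ k) (hm : 1 ≤ m) (C : MvPowerSeries (Fin k) ℚ)
    (hC : ∀ d : Fin k →₀ ℕ, MvPowerSeries.coeff d C =
      Nat.card {w : List (Fin k) //
        (∀ i, ¬ (List.replicate m i <:+: w)) ∧ ∀ i, w.count i = d i}) :
    (1 - ∑ i, (MvPowerSeries.X i - MvPowerSeries.X i ^ m) *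
        (1 - MvPowerSeries.X i ^ m)⁻¹) * C = 1 := by
  classical
  have hNC : ∀ d : Fin k →₀ ℕ, MvPowerSeries.coeff d C = (N m d : ℚ) := fun d => hC d
  set Ci : Fin k → MvPowerSeries (Fin k) ℚ := fun i => fun d => ((Ni m i d : ℚ)) with hCi
  have hci : ∀ (i : Fin k) (d : Fin k →₀ ℕ), MvPowerSeries.coeff d (Ci i) = (Ni m i d : ℚ) :=
    fun i d => rfl
  have hx : ∀ i : Fin k, (X i : MvPowerSeries (Fin k) ℚ) = monomial (Finsupp.single i 1) 1 := by
    intro i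
    rw [← pow_one (X i : MvPowerSeries (Fin k) ℚ), X_pow_eq]
  -- key1 : Ci i * (1 - X i ^ m) = (X i - X i ^ m) * C
  have key1 : ∀ i : Fin k, Ci i * (1 - X i ^ m) = (X i - X i ^ m) * C := by
    intro i
    ext d
    rw [mul_sub, mul_one, sub_mul, map_sub, map_sub, X_pow_eq, coeff_mul_monomial,
      hx i, coeff_monomial_mul, coeff_monomial_mul, hci]
    simp only [one_mul, mul_one, Finsupp.single_le_iff, hNC, hci]
    by_cases h1 : m ≤ d i
    · rw [if_pos h1, if_pos h1, if_pos (show 1 ≤ d i by omega)]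
      have h3 := F3 hm i d h1
      have : ((Ni m i d : ℚ) + N m (d - Finsupp.single i m))
          = (N m (d - Finsupp.single i 1) + Ni m i (d - Finsupp.single i m)) := by
        exact_mod_cast congrArg (Nat.cast : ℕ → ℚ) h3
      linarith
    · rw [if_neg h1, if_neg h1, sub_zero, sub_zero]
      by_cases h2 : 1 ≤ d i
      · rw [if_pos h2]
        exact_mod_cast congrArg (Nat.cast : ℕ → ℚ) (F2 hm i d h2 (by omega))
      · rw [if_neg h2]
        exact_mod_cast congrArg (Nat.cast : ℕ → ℚ) (Ni_eq_zero (show d i = 0 by omega))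
  -- key2 : C = 1 + ∑ i, Ci i
  have key2 : C = 1 + ∑ i, Ci i := by
    ext d
    rw [map_add, map_sum, hNC, coeff_one]
    simp only [hci]
    have := F1 (m := m) (k := k) hm d
    have hcast : ((N m d : ℚ)) = ((if d = 0 then 1 else 0) + ∑ i, (Ni m i d : ℚ)) := by
      exact_mod_cast congrArg (Nat.cast : ℕ → ℚ) this
    rw [hcast]
  -- units
  have unit : ∀ i : Fin k, (1 - (X i : MvPowerSeries (Fin k) ℚ) ^ m) * (1 - X i ^ m)⁻¹ = 1 := by
    intro i
    apply MvPowerSeries.mul_inv_cancel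
    rw [map_sub, map_pow, constantCoeff_X, map_one, zero_pow (by omega), sub_zero]
    exact one_ne_zero
  have hfC : ∀ i : Fin k, ((X i : MvPowerSeries (Fin k) ℚ) - X i ^ m) * (1 - X i ^ m)⁻¹ * C
      = Ci i := by
    intro i
    have h := key1 i
    calc ((X i : MvPowerSeries (Fin k) ℚ) - X i ^ m) * (1 - X i ^ m)⁻¹ * C
        = ((X i - X i ^ m) * C) * (1 - X i ^ m)⁻¹ := by ring
      _ = (Ci i * (1 - X i ^ m)) * (1 - X i ^ m)⁻¹ := by rw [← h]
      _ = Ci i * ((1 - X i ^ m) * (1 - X i ^ m)⁻¹) := by ring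
      _ = Ci i := by rw [unit i, mul_one]
  rw [sub_mul, one_mul, Finset.sum_mul]
  have : ∀ i ∈ (Finset.univ : Finset (Fin k)),
      ((X i : MvPowerSeries (Fin k) ℚ) - X i ^ m) * (1 - X i ^ m)⁻¹ * C = Ci i :=
    fun i _ => hfC i
  rw [Finset.sum_congr rfl this, key2]
  ring
end

section
/- Let n ≥ 1 and m_1, …, m_n ≥ 1 be integers and τ the vincular pattern 1^{m_1}-1^{m_2}-⋯-1^{m_n}. In ℚ[[x,u]], Σ_c x^{sum(c)} u^{len(c)}, summed over all compositions c that contain τ, equals u·x^{m_1}·(1−x) · D_1^{-1} · (1−x−ux)^{-1} · ∏_{i=2}^n ( x^{m_i} + u·x^{m_i}·(1 − x^{m_i})·D_i^{-1} ), where D_i = 1 − x − u(x − x^{m_i}) (each D_i and 1−x−ux has constant coefficient 1, hence is invertible), sum(c) is the sum of the parts of c, and len(c) is the number of parts. -/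
/-- A composition `c = (c_1, …, c_p)` (a list of positive integers) contains the vincular
pattern `1^{m_1}-…-1^{m_n}` if there are monotone indices `f_1 ≤ … ≤ f_n` into the parts
of `c` such that for every part `j`, `Σ_{i : f_i = j} m_i ≤ c_j`. -/
def CompContains {n : ℕ} (m : Fin n → ℕ) (c : List ℕ) : Prop :=
  ∃ f : Fin n → Fin c.length, Monotone f ∧
    ∀ j : Fin c.length, (∑ i ∈ Finset.univ.filter fun i => f i = j, m i) ≤ c.get j

/-- The variable `x` of `ℚ[[x,u]]`. -/
noncomputable def px : MvPowerSeries (Fin 2) ℚ := MvPowerSeries.X 0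
/-- The variable `u` of `ℚ[[x,u]]`. -/
noncomputable def pu : MvPowerSeries (Fin 2) ℚ := MvPowerSeries.X 1
/-- `D_i = 1 − x − u(x − x^{m_i})`. -/
noncomputable def Dfac (mi : ℕ) : MvPowerSeries (Fin 2) ℚ := 1 - px - pu * (px - px ^ mi)



namespace VP

variable {n : ℕ}

/-- Pattern block sizes extended to all of ℕ by 1. -/
def mu (m : Fin n → ℕ) (t : ℕ) : ℕ := if h : t < n then m ⟨t, h⟩ else 1

/-- Partial sums of the pattern block sizes. -/
def Ms (m : Fin n → ℕ) (k : ℕ) : ℕ := ∑ t ∈ Finset.range k, mu m t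

/-- Greedy transition: from state `j`, reading a part of size `a`. -/
def stp (m : Fin n → ℕ) (j a : ℕ) : ℕ := Nat.findGreatest (fun k => Ms m k ≤ Ms m j + a) n

/-- Number of pattern blocks matched by the greedy left-to-right scan. -/
def reach (m : Fin n → ℕ) (c : List ℕ) : ℕ := c.foldl (stp m) 0

/-- The first `k` blocks of the pattern embed monotonically into `c`. -/
def Emb (m : Fin n → ℕ) (k : ℕ) (c : List ℕ) : Prop :=
  ∃ f : ℕ → ℕ, (∀ i j, i ≤ j → j < k → f i ≤ f j) ∧ (∀ i, i < k → f i < c.length) ∧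
    ∀ j, (∑ i ∈ (Finset.range k).filter (fun i => f i = j), mu m i) ≤ c.getD j 0

variable {m : Fin n → ℕ}

theorem mu_pos (hm : ∀ i, 1 ≤ m i) (t : ℕ) : 1 ≤ mu m t := by
  unfold mu; split <;> simp [hm]

theorem Ms_succ (m : Fin n → ℕ) (k : ℕ) : Ms m (k + 1) = Ms m k + mu m k :=
  Finset.sum_range_succ _ _

theorem Ms_strictMono (hm : ∀ i, 1 ≤ m i) : StrictMono (Ms m) :=
  strictMono_nat_of_lt_succ fun k => by
    rw [Ms_succ]; have := mu_pos hm k; omega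

theorem Ms_mono (hm : ∀ i, 1 ≤ m i) : Monotone (Ms m) := (Ms_strictMono hm).monotone

theorem stp_le (j a : ℕ) : stp m j a ≤ n := Nat.findGreatest_le n

theorem le_stp (hj : j ≤ n) (a : ℕ) : j ≤ stp m j a :=
  Nat.le_findGreatest hj (Nat.le_add_right _ _)

theorem stp_spec (j a : ℕ) : Ms m (stp m j a) ≤ Ms m j + a :=
  Nat.findGreatest_spec (P := fun k => Ms m k ≤ Ms m j + a) (Nat.zero_le n) (by simp [Ms])

theorem le_stp_of (hk : k ≤ n) (h : Ms m k ≤ Ms m j + a) : k ≤ stp m j a :=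
  Nat.le_findGreatest hk h

theorem stp_is_greatest (hk : k ≤ n) (h : stp m j a < k) : ¬ (Ms m k ≤ Ms m j + a) :=
  Nat.findGreatest_is_greatest (P := fun k => Ms m k ≤ Ms m j + a) h hk

@[simp] theorem reach_nil (m : Fin n → ℕ) : reach m [] = 0 := rfl

theorem reach_append (m : Fin n → ℕ) (c : List ℕ) (a : ℕ) :
    reach m (c ++ [a]) = stp m (reach m c) a := by
  simp [reach, List.foldl_append]

theorem reach_le (m : Fin n → ℕ) (c : List ℕ) : reach m c ≤ n := by
  induction c using List.reverseRecOn with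
  | nil => simp
  | append_singleton c a ih => rw [reach_append]; exact stp_le _ _

theorem emb_zero (m : Fin n → ℕ) (c : List ℕ) : Emb m 0 c :=
  ⟨fun _ => 0, by omega, by omega, fun j => by simp⟩

end VP

namespace VP
variable {n : ℕ} {m : Fin n → ℕ}

theorem emb_le_reach (hm : ∀ i, 1 ≤ m i) (c : List ℕ) :
    ∀ k, k ≤ n → Emb m k c → k ≤ reach m c := by
  induction c using List.reverseRecOn with
  | nil =>
    intro k _ ⟨f, _, hbd, _⟩
    rcases Nat.eq_zero_or_pos k with h | h
    · omega
    · have := hbd 0 h; simp at this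
  | append_singleton c' a ih =>
    intro k hkn ⟨f, hmono, hbd, hsum⟩
    set L' := c'.length with hL'
    set j0 := Nat.findGreatest (fun t => ∀ i < t, f i < L') k with hj0
    have hj0k : j0 ≤ k := Nat.findGreatest_le k
    have hA : ∀ i < j0, f i < L' :=
      Nat.findGreatest_spec (P := fun t => ∀ i < t, f i < L') (Nat.zero_le k) (by omega)
    have hB : ∀ i, j0 ≤ i → i < k → L' ≤ f i := by
      have hBj0 : j0 < k → L' ≤ f j0 := by
        intro hj0k'
        by_contra hlt
        have : j0 + 1 ≤ j0 := Nat.le_findGreatest hj0k' (by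
          intro i hi
          rcases Nat.lt_succ_iff_lt_or_eq.mp hi with h | h
          · exact hA i h
          · subst h; omega)
        omega
      intro i hji hik
      exact (hBj0 (by omega)).trans (hmono j0 i hji hik)
    -- Emb m j0 c'
    have hEmb' : Emb m j0 c' := by
      refine ⟨f, fun i j hij hj => hmono i j hij (by omega), fun i hi => hA i hi, ?_⟩
      intro j
      rcases lt_or_ge j L' with hj | hj
      · calc ∑ i ∈ (Finset.range j0).filter (fun i => f i = j), mu m i
            ≤ ∑ i ∈ (Finset.range k).filter (fun i => f i = j), mu m i :=
              Finset.sum_le_sum_of_subset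
                (Finset.filter_subset_filter _ (Finset.range_subset_range.mpr hj0k))
          _ ≤ (c' ++ [a]).getD j 0 := hsum j
          _ = c'.getD j 0 := List.getD_append _ _ _ _ hj
      · have : (Finset.range j0).filter (fun i => f i = j) = ∅ := by
          rw [Finset.filter_eq_empty_iff]
          intro i hi
          have := hA i (Finset.mem_range.mp hi)
          omega
        simp [this]
    have hj0r : j0 ≤ reach m c' := ih j0 (by omega) hEmb'
    -- sum of blocks j0..k-1 fits in a
    have hfilter : (Finset.range k).filter (fun i => f i = L') = Finset.Ico j0 k := by
      ext i
      simp only [Finset.mem_filter, Finset.mem_range, Finset.mem_Ico]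
      constructor
      · rintro ⟨hik, hfi⟩
        refine ⟨?_, hik⟩
        by_contra h
        have := hA i (by omega)
        omega
      · rintro ⟨hji, hik⟩
        have h1 := hB i hji hik
        have h2 := hbd i hik
        simp only [List.length_append, List.length_singleton] at h2
        refine ⟨hik, by omega⟩
    have hsumL : ∑ i ∈ Finset.Ico j0 k, mu m i ≤ a := by
      have := hsum L'
      rw [hfilter] at this
      rwa [List.getD_append_right _ _ _ _ (le_refl L'), Nat.sub_self] at this
    have hMssplit : Ms m j0 + ∑ i ∈ Finset.Ico j0 k, mu m i = Ms m k := by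
      rw [Ms, Ms, Finset.range_eq_Ico, Finset.range_eq_Ico]
      exact Finset.sum_Ico_consecutive _ (Nat.zero_le _) hj0k
    have hkey : Ms m k ≤ Ms m (reach m c') + a := by
      have := Ms_mono hm hj0r
      omega
    rw [reach_append]
    exact le_stp_of hkn hkey

theorem reach_emb (hm : ∀ i, 1 ≤ m i) (c : List ℕ) : Emb m (reach m c) c := by
  induction c using List.reverseRecOn with
  | nil => simpa using emb_zero m []
  | append_singleton c' a ih =>
    obtain ⟨f', hmono', hbd', hsum'⟩ := ih
    set L' := c'.length with hL'
    set r' := reach m c' with hr'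
    set r := stp m r' a with hr
    have hr'n : r' ≤ n := reach_le m c'
    have hr'r : r' ≤ r := le_stp hr'n a
    have hMs : Ms m r ≤ Ms m r' + a := stp_spec r' a
    rw [reach_append, ← hr]
    refine ⟨fun i => if i < r' then f' i else L', ?_, ?_, ?_⟩
    · intro i j hij hj
      by_cases hjr : j < r'
      · have hir : i < r' := by omega
        simp only [if_pos hjr, if_pos hir]
        exact hmono' i j hij hjr
      · by_cases hir : i < r'
        · simp only [if_neg hjr, if_pos hir]
          exact le_of_lt (hbd' i hir)
        · simp [if_neg hjr, if_neg hir]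
    · intro i hi
      simp only [List.length_append, List.length_singleton]
      by_cases hir : i < r'
      · have := hbd' i hir; simp only [if_pos hir]; omega
      · simp only [if_neg hir]; omega
    · intro j
      rcases lt_trichotomy j L' with hj | hj | hj
      · have hfeq : (Finset.range r).filter
            (fun i => (if i < r' then f' i else L') = j) =
            (Finset.range r').filter (fun i => f' i = j) := by
          ext i
          simp only [Finset.mem_filter, Finset.mem_range]
          constructor
          · rintro ⟨hir, hfi⟩
            by_cases h : i < r'
            · rw [if_pos h] at hfi; exact ⟨h, hfi⟩
            · rw [if_neg h] at hfi; omega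
          · rintro ⟨hir, hfi⟩
            exact ⟨by omega, by rw [if_pos hir]; exact hfi⟩
        rw [hfeq, List.getD_append _ _ _ _ hj]
        exact hsum' j
      · subst hj
        have hfeq : (Finset.range r).filter
            (fun i => (if i < r' then f' i else L') = L') = Finset.Ico r' r := by
          ext i
          simp only [Finset.mem_filter, Finset.mem_range, Finset.mem_Ico]
          constructor
          · rintro ⟨hir, hfi⟩
            by_cases h : i < r'
            · rw [if_pos h] at hfi; have := hbd' i h; omega
            · exact ⟨by omega, hir⟩
          · rintro ⟨hri, hir⟩
            exact ⟨hir, by rw [if_neg (by omega)]⟩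
        rw [hfeq]
        rw [List.getD_append_right _ _ _ _ (le_refl L'), Nat.sub_self]
        have hMssplit : Ms m r' + ∑ i ∈ Finset.Ico r' r, mu m i = Ms m r := by
          rw [Ms, Ms, Finset.range_eq_Ico, Finset.range_eq_Ico]
          exact Finset.sum_Ico_consecutive _ (Nat.zero_le _) hr'r
        have hgd : ([a] : List ℕ).getD 0 0 = a := rfl
        omega
      · have hfeq : (Finset.range r).filter
            (fun i => (if i < r' then f' i else L') = j) = ∅ := by
          rw [Finset.filter_eq_empty_iff]
          intro i _
          by_cases h : i < r'
          · rw [if_pos h]; have := hbd' i h; omega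
          · rw [if_neg h]; omega
        simp [hfeq]

end VP

namespace VP
variable {n : ℕ} {m : Fin n → ℕ}

theorem sum_bridge (c : List ℕ) (F : Fin n → Fin c.length) (g : ℕ → ℕ)
    (hg : ∀ i : Fin n, g i.val = (F i).val) (jf : Fin c.length) :
    ∑ i ∈ (Finset.range n).filter (fun i => g i = jf.val), mu m i =
      ∑ i ∈ Finset.univ.filter (fun i => F i = jf), m i := by
  rw [Finset.sum_filter, Finset.sum_filter, Finset.sum_range]
  apply Finset.sum_congr rfl
  intro i _
  have h1 : (g i.val = jf.val) ↔ (F i = jf) := by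
    rw [hg i]
    exact ⟨fun h => Fin.ext h, fun h => by rw [h]⟩
  have h2 : mu m i.val = m i := by
    simp [mu, i.isLt]
  simp only [h2]
  congr 1
  · exact propext h1

theorem compContains_iff_reach (hm : ∀ i, 1 ≤ m i) (c : List ℕ) :
    CompContains m c ↔ reach m c = n := by
  constructor
  · rintro ⟨f, hfmono, hfsum⟩
    have hemb : Emb m n c := by
      refine ⟨fun i => if h : i < n then (f ⟨i, h⟩ : ℕ) else 0, ?_, ?_, ?_⟩
      · intro i j hij hj
        simp only []
        rw [dif_pos (by omega : i < n), dif_pos hj]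
        exact hfmono (by exact hij)
      · intro i hi
        simp only []
        rw [dif_pos hi]
        exact (f ⟨i, hi⟩).isLt
      · intro j
        rcases lt_or_ge j c.length with hj | hj
        · have := sum_bridge (m := m) c f (fun i => if h : i < n then (f ⟨i, h⟩ : ℕ) else 0)
            (fun i => by simp) ⟨j, hj⟩
          rw [this]
          have := hfsum ⟨j, hj⟩
          rw [List.getD_eq_getElem _ _ hj]
          simpa [List.get_eq_getElem] using this
        · have : (Finset.range n).filter
              (fun i => (if h : i < n then (f ⟨i, h⟩ : ℕ) else 0) = j) = ∅ := by
            rw [Finset.filter_eq_empty_iff]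
            intro i hi
            rw [dif_pos (Finset.mem_range.mp hi)]
            have := (f ⟨i, Finset.mem_range.mp hi⟩).isLt
            omega
          simp [this]
    have h1 := emb_le_reach hm c n (le_refl n) hemb
    have h2 := reach_le m c
    omega
  · intro hr
    obtain ⟨g, hgmono, hgbd, hgsum⟩ := reach_emb hm c
    rw [hr] at hgmono hgbd hgsum
    refine ⟨fun i => ⟨g i.val, hgbd i.val i.isLt⟩, ?_, ?_⟩
    · intro i j hij
      exact hgmono i.val j.val hij j.isLt
    · intro jf
      rw [← sum_bridge c _ g (fun i => rfl) jf]
      have := hgsum jf.val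
      rw [List.getD_eq_getElem _ _ jf.isLt] at this
      simpa [List.get_eq_getElem] using this

end VP

namespace VP

/-- (0-indexed) helper Finsupp on `Fin 2`. -/
noncomputable def fs (a b : ℕ) : Fin 2 →₀ ℕ := Finsupp.single 0 a + Finsupp.single 1 b

open Finsupp in
theorem fs_apply0 (a b : ℕ) : fs a b 0 = a := by
  simp [fs, Finsupp.single_apply]

open Finsupp in
theorem fs_apply1 (a b : ℕ) : fs a b 1 = b := by
  simp [fs, Finsupp.single_apply]

theorem fs_eta (d : Fin 2 →₀ ℕ) : fs (d 0) (d 1) = d := by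
  ext i
  have : i = 0 ∨ i = 1 := by omega
  rcases this with h | h <;> subst h <;> simp [fs_apply0, fs_apply1]

theorem fs_add (a b a' b' : ℕ) : fs a b + fs a' b' = fs (a + a') (b + b') := by
  ext i
  have : i = 0 ∨ i = 1 := by omega
  rcases this with h | h <;> subst h <;>
    simp [fs_apply0, fs_apply1, Finsupp.add_apply]

theorem eq_fs_iff (d : Fin 2 →₀ ℕ) (a b : ℕ) : d = fs a b ↔ d 0 = a ∧ d 1 = b := by
  constructor
  · rintro rfl; exact ⟨fs_apply0 a b, fs_apply1 a b⟩
  · rintro ⟨h0, h1⟩; rw [← fs_eta d, h0, h1]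

theorem coeff_apply' (φ : MvPowerSeries (Fin 2) ℚ) (d : Fin 2 →₀ ℕ) :
    MvPowerSeries.coeff d φ = φ d := rfl

open Classical in
/-- The series `Σ_{a ∈ A} u x^a`. -/
noncomputable def Wser (A : Set ℕ) : MvPowerSeries (Fin 2) ℚ :=
  fun d => if d 1 = 1 ∧ d 0 ∈ A then 1 else 0

open Classical in
theorem coeff_Wser (A : Set ℕ) (d : Fin 2 →₀ ℕ) :
    MvPowerSeries.coeff d (Wser A) = if d 1 = 1 ∧ d 0 ∈ A then 1 else 0 := by
  rw [coeff_apply', Wser]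

theorem monom_eq (A : ℕ) :
    pu * px ^ A = MvPowerSeries.monomial (fs A 1) 1 := by
  rw [pu, px, MvPowerSeries.X_pow_eq, MvPowerSeries.X]
  rw [MvPowerSeries.monomial_mul_monomial]
  rw [one_mul]
  congr 1
  rw [fs, add_comm]

open Classical in
theorem coeff_pu_px_pow (A : ℕ) (d : Fin 2 →₀ ℕ) :
    MvPowerSeries.coeff d (pu * px ^ A) = if d 0 = A ∧ d 1 = 1 then 1 else 0 := by
  rw [monom_eq, MvPowerSeries.coeff_monomial]
  congr 1
  rw [eq_comm]
  simp [eq_fs_iff]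

theorem coeff_mul_px (φ : MvPowerSeries (Fin 2) ℚ) (d : Fin 2 →₀ ℕ) :
    MvPowerSeries.coeff d (φ * px) =
      if d 0 = 0 then 0 else MvPowerSeries.coeff (fs (d 0 - 1) (d 1)) φ := by
  rw [px, MvPowerSeries.X, MvPowerSeries.coeff_mul_monomial]
  by_cases h : d 0 = 0
  · rw [if_neg, if_pos h]
    rw [Finsupp.single_le_iff]
    omega
  · have hd : d - Finsupp.single 0 1 = fs (d 0 - 1) (d 1) := by
      ext i
      have hi : i = 0 ∨ i = 1 := by omega
      rcases hi with hi | hi <;> subst hi <;>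
        simp [fs_apply0, fs_apply1, Finsupp.single_apply, Finsupp.tsub_apply]
    rw [if_pos (Finsupp.single_le_iff.mpr (by omega)), if_neg h, mul_one, hd]

end VP

namespace VP

theorem Wser_Ici_mul (A : ℕ) : Wser {a | A ≤ a} * (1 - px) = pu * px ^ A := by
  ext d
  rw [mul_sub, mul_one, map_sub, coeff_mul_px, coeff_pu_px_pow, coeff_Wser, coeff_Wser]
  simp only [fs_apply0, fs_apply1, Set.mem_setOf_eq]
  split_ifs <;> simp_all <;> omega

theorem Wser_sub (A B : ℕ) (hAB : A ≤ B) :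
    Wser {a | A ≤ a ∧ a < B} = Wser {a | A ≤ a} - Wser {a | B ≤ a} := by
  ext d
  rw [map_sub, coeff_Wser, coeff_Wser, coeff_Wser]
  simp only [Set.mem_setOf_eq]
  split_ifs <;> simp_all <;> omega

theorem Wser_Ico_mul (A B : ℕ) (hAB : A ≤ B) :
    Wser {a | A ≤ a ∧ a < B} * (1 - px) = pu * px ^ A - pu * px ^ B := by
  rw [Wser_sub A B hAB, sub_mul, Wser_Ici_mul, Wser_Ici_mul]

theorem Wser_zero {A : Set ℕ} (h : ∀ a, a ∉ A) : Wser A = 0 := by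
  ext d
  rw [coeff_Wser]
  simp [h]

end VP

namespace VP
open Classical in
theorem coeff_mul_Wser (φ : MvPowerSeries (Fin 2) ℚ) (A : Set ℕ) (hA : 0 ∉ A) (d : Fin 2 →₀ ℕ) :
    MvPowerSeries.coeff d (φ * Wser A) =
      if d 1 = 0 then 0
      else ∑ a ∈ (Finset.Icc 1 (d 0)).filter (· ∈ A),
        MvPowerSeries.coeff (fs (d 0 - a) (d 1 - 1)) φ := by
  classical
  rw [MvPowerSeries.coeff_mul]
  have hW : ∀ p : (Fin 2 →₀ ℕ) × (Fin 2 →₀ ℕ),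
      MvPowerSeries.coeff p.1 φ * MvPowerSeries.coeff p.2 (Wser A) =
      if p.2 1 = 1 ∧ p.2 0 ∈ A then MvPowerSeries.coeff p.1 φ else 0 := by
    intro p
    rw [coeff_Wser]
    split_ifs <;> simp
  simp only [hW]
  rw [← Finset.sum_filter]
  have hmem : ∀ p : (Fin 2 →₀ ℕ) × (Fin 2 →₀ ℕ),
      p ∈ Finset.HasAntidiagonal.antidiagonal d → p.1 0 + p.2 0 = d 0 ∧ p.1 1 + p.2 1 = d 1 := by
    intro p hp
    rw [Finset.HasAntidiagonal.mem_antidiagonal] at hp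
    constructor
    · rw [← hp]; simp [Finsupp.add_apply]
    · rw [← hp]; simp [Finsupp.add_apply]
  by_cases hd1 : d 1 = 0
  · rw [if_pos hd1]
    rw [Finset.sum_eq_zero]
    intro p hp
    rw [Finset.mem_filter] at hp
    have := hmem p hp.1
    exfalso
    have h2 := hp.2.1
    omega
  · rw [if_neg hd1]
    refine Finset.sum_nbij' (i := fun p => p.2 0)
      (j := fun a => (fs (d 0 - a) (d 1 - 1), fs a 1)) ?_ ?_ ?_ ?_ ?_
    · intro p hp
      rw [Finset.mem_filter] at hp
      obtain ⟨h01, _⟩ := hmem p hp.1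
      rw [Finset.mem_filter, Finset.mem_Icc]
      refine ⟨⟨?_, by omega⟩, hp.2.2⟩
      rcases Nat.eq_zero_or_pos (p.2 0) with h | h
      · exact absurd (h ▸ hp.2.2) hA
      · omega
    · intro a ha
      rw [Finset.mem_filter, Finset.mem_Icc] at ha
      rw [Finset.mem_filter, Finset.HasAntidiagonal.mem_antidiagonal]
      refine ⟨?_, by rw [fs_apply1], by rw [fs_apply0]; exact ha.2⟩
      rw [fs_add]
      have h1 : d 0 - a + a = d 0 := by omega
      have h2 : d 1 - 1 + 1 = d 1 := by omega
      rw [h1, h2, fs_eta]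
    · intro p hp
      rw [Finset.mem_filter] at hp
      obtain ⟨h01, h11⟩ := hmem p hp.1
      have h2 := hp.2.1
      rw [Prod.ext_iff]
      constructor
      · dsimp only
        rw [eq_comm, eq_fs_iff]
        omega
      · dsimp only
        rw [eq_comm, eq_fs_iff]
        omega
    · intro a _
      dsimp only
      rw [fs_apply0]
    · intro p hp
      rw [Finset.mem_filter] at hp
      obtain ⟨h01, h11⟩ := hmem p hp.1
      have h2 := hp.2.1
      have hp1 : p.1 = fs (d 0 - p.2 0) (d 1 - 1) := by
        rw [eq_fs_iff]
        omega
      rw [hp1]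

end VP

namespace VP
variable {n : ℕ} {m : Fin n → ℕ}

def Aset (m : Fin n → ℕ) (j i : ℕ) : Set ℕ := {a | 1 ≤ a ∧ stp m j a = i}

theorem Aset_not0 (j i : ℕ) : (0 : ℕ) ∉ Aset m j i := by
  simp [Aset]

theorem Aset_empty_of_lt (hjn : j ≤ n) (hij : i < j) : Aset m j i = ∅ := by
  ext a
  simp only [Aset, Set.mem_setOf_eq, Set.mem_empty_iff_false, iff_false, not_and]
  intro _
  have := le_stp (m := m) hjn a
  omega

theorem Aset_lt (hm : ∀ i, 1 ≤ m i) (hji : j < i) (hin : i < n) :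
    Aset m j i = {a | Ms m i - Ms m j ≤ a ∧ a < Ms m (i + 1) - Ms m j} := by
  have hMsji : Ms m j < Ms m i := Ms_strictMono hm hji
  have hMsii : Ms m i < Ms m (i + 1) := Ms_strictMono hm (by omega)
  ext a
  simp only [Aset, Set.mem_setOf_eq]
  constructor
  · rintro ⟨ha, hstp⟩
    have h1 := stp_spec (m := m) j a
    rw [hstp] at h1
    have h2 := stp_is_greatest (m := m) (j := j) (a := a) (k := i + 1) (by omega) (by omega)
    omega
  · rintro ⟨h1, h2⟩
    have hstp : stp m j a = i := by
      have hle : i ≤ stp m j a := le_stp_of (by omega) (by omega)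
      by_contra hne
      have hlt : i + 1 ≤ stp m j a := by omega
      have := Ms_mono hm hlt
      have := stp_spec (m := m) j a
      omega
    exact ⟨by omega, hstp⟩

theorem Aset_diag (hm : ∀ i, 1 ≤ m i) (hin : i < n) :
    Aset m i i = {a | 1 ≤ a ∧ a < mu m i} := by
  have hMsii : Ms m (i + 1) = Ms m i + mu m i := Ms_succ m i
  ext a
  simp only [Aset, Set.mem_setOf_eq]
  constructor
  · rintro ⟨ha, hstp⟩
    refine ⟨ha, ?_⟩
    have h2 := stp_is_greatest (m := m) (j := i) (a := a) (k := i + 1) (by omega) (by omega)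
    omega
  · rintro ⟨h1, h2⟩
    refine ⟨h1, ?_⟩
    have hle : i ≤ stp m i a := le_stp_of (by omega) (by omega)
    by_contra hne
    have hlt : i + 1 ≤ stp m i a := by omega
    have := Ms_mono hm hlt
    have := stp_spec (m := m) i a
    omega

theorem Aset_lt_n (hm : ∀ i, 1 ≤ m i) (hjn : j < n) :
    Aset m j n = {a | Ms m n - Ms m j ≤ a} := by
  have hMsji : Ms m j < Ms m n := Ms_strictMono hm hjn
  ext a
  simp only [Aset, Set.mem_setOf_eq]
  constructor
  · rintro ⟨ha, hstp⟩
    have h1 := stp_spec (m := m) j a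
    rw [hstp] at h1
    omega
  · intro h1
    have hle : n ≤ stp m j a := le_stp_of (le_refl n) (by omega)
    have := stp_le (m := m) j a
    omega

theorem Aset_diag_n : Aset m n n = {a | 1 ≤ a} := by
  ext a
  simp only [Aset, Set.mem_setOf_eq]
  constructor
  · rintro ⟨ha, _⟩; exact ha
  · intro h1
    have hle : n ≤ stp m n a := le_stp (le_refl n) a
    have := stp_le (m := m) n a
    omega

/-- The generating function of compositions with greedy state `i`. -/
noncomputable def Fser (m : Fin n → ℕ) (i : ℕ) : MvPowerSeries (Fin 2) ℚ :=
  fun d => (Nat.card {c : List ℕ //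
    (∀ x ∈ c, 0 < x) ∧ c.sum = d 0 ∧ c.length = d 1 ∧ reach m c = i} : ℚ)

theorem coeff_Fser (i : ℕ) (d : Fin 2 →₀ ℕ) :
    MvPowerSeries.coeff d (Fser m i) = (Nat.card {c : List ℕ //
      (∀ x ∈ c, 0 < x) ∧ c.sum = d 0 ∧ c.length = d 1 ∧ reach m c = i} : ℚ) := rfl

theorem card_lists_eq (P : List ℕ → Prop) (s l : ℕ)
    [inst : ∀ C : Composition s, Decidable (P C.blocks)] :
    (Nat.card {c : List ℕ // (∀ x ∈ c, 0 < x) ∧ c.sum = s ∧ c.length = l ∧ P c}) =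
      (Finset.univ.filter
        (fun C : Composition s => C.blocks.length = l ∧ P C.blocks)).card := by
  classical
  have e : {c : List ℕ // (∀ x ∈ c, 0 < x) ∧ c.sum = s ∧ c.length = l ∧ P c} ≃
      {C : Composition s // C.blocks.length = l ∧ P C.blocks} :=
    { toFun := fun c => ⟨⟨c.1, fun {x} hx => c.2.1 x hx, c.2.2.1⟩, c.2.2.2.1, c.2.2.2.2⟩
      invFun := fun C => ⟨C.1.blocks,
        fun x hx => C.1.blocks_pos hx, C.1.blocks_sum, C.2.1, C.2.2⟩
      left_inv := fun c => rfl
      right_inv := fun C => Subtype.ext (by ext1; rfl) }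
  rw [Nat.card_congr e, Nat.card_eq_fintype_card, Fintype.card_subtype]

end VP

namespace VP
variable {n : ℕ} {m : Fin n → ℕ}

theorem concat_struct {c : List ℕ} {l : ℕ} (h : c.length = l + 1) :
    c.dropLast.length = l ∧ c = c.dropLast ++ [c.getD l 0] := by
  have hne : c ≠ [] := by
    intro h0; rw [h0] at h; simp at h
  have hlen : c.dropLast.length = l := by
    rw [List.length_dropLast, h]
    omega
  refine ⟨hlen, ?_⟩
  have hd := List.dropLast_append_getLast hne
  have hgd : c.getD l 0 = c.getLast hne := by
    conv_lhs => rw [← hd]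
    rw [List.getD_append_right _ _ _ _ (by omega)]
    rw [hlen, Nat.sub_self]
    rfl
  rw [hgd]
  exact hd.symm

open Classical in
theorem card_step (s l i : ℕ) :
    (Finset.univ.filter
      (fun C : Composition s => C.blocks.length = l + 1 ∧ reach m C.blocks = i)).card =
    ∑ p ∈ (Finset.range (n + 1)) ×ˢ (Finset.Icc 1 s),
      if stp m p.1 p.2 = i then
        (Finset.univ.filter (fun C : Composition (s - p.2) =>
          C.blocks.length = l ∧ reach m C.blocks = p.1)).card
      else 0 := by
  classical
  rw [Finset.card_eq_sum_card_fiberwise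
    (f := fun C : Composition s => (reach m C.blocks.dropLast, C.blocks.getD l 0))
    (t := (Finset.range (n + 1)) ×ˢ (Finset.Icc 1 s)) ?hmem]
  case hmem =>
    intro C hC
    rw [Finset.mem_coe, Finset.mem_filter] at hC
    obtain ⟨hlen, hcat⟩ := concat_struct hC.2.1
    have hbmem : C.blocks.getD l 0 ∈ C.blocks := by
      rw [List.getD_eq_getElem _ _ (by omega)]
      exact List.getElem_mem _
    have hbpos : 0 < C.blocks.getD l 0 := C.blocks_pos hbmem
    have hbsum : C.blocks.dropLast.sum + C.blocks.getD l 0 = s := by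
      conv_rhs => rw [← C.blocks_sum]
      conv_rhs => rw [hcat]
      simp
    dsimp only
    rw [Finset.mem_coe, Finset.mem_product, Finset.mem_range, Finset.mem_Icc]
    have hrl := reach_le m C.blocks.dropLast
    exact ⟨by omega, by omega, by omega⟩
  apply Finset.sum_congr rfl
  rintro ⟨j, a⟩ hp
  rw [Finset.mem_product, Finset.mem_range, Finset.mem_Icc] at hp
  obtain ⟨hjn, ha1, has⟩ := hp
  by_cases hstp : stp m j a = i
  · rw [if_pos hstp]
    refine Finset.card_bij'
      (i := fun C hC => (⟨C.blocks.dropLast,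
        fun {x} hx => C.blocks_pos ((List.dropLast_sublist _).subset hx), by
          rw [Finset.mem_filter, Finset.mem_filter] at hC
          obtain ⟨⟨_, hlen, _⟩, hfib⟩ := hC
          obtain ⟨hlen', hcat⟩ := concat_struct hlen
          have heq : Prod.mk (reach m C.blocks.dropLast) (C.blocks.getD l 0)
              = (j, a) := hfib
          have ha : C.blocks.getD l 0 = a := congrArg Prod.snd heq
          have hbsum : C.blocks.dropLast.sum + C.blocks.getD l 0 = s := by
            conv_rhs => rw [← C.blocks_sum]
            conv_rhs => rw [hcat]
            simp
          omega⟩ : Composition (s - a)))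
      (j := fun C' hC' => (⟨C'.blocks ++ [a], fun {x} hx => by
          rcases List.mem_append.mp hx with hx | hx
          · exact C'.blocks_pos hx
          · rw [List.mem_singleton] at hx; omega, by
          rw [List.sum_append, C'.blocks_sum]
          simp only [List.sum_cons, List.sum_nil]
          omega⟩ : Composition s)) ?hi ?hj ?left ?right
    case hi =>
      intro C hC
      rw [Finset.mem_filter, Finset.mem_filter] at hC
      obtain ⟨⟨_, hlen, hreach⟩, hfib⟩ := hC
      obtain ⟨hlen', hcat⟩ := concat_struct hlen
      have hj : reach m C.blocks.dropLast = j := congrArg Prod.fst hfib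
      rw [Finset.mem_filter]
      exact ⟨Finset.mem_univ _, hlen', hj⟩
    case hj =>
      intro C' hC'
      rw [Finset.mem_filter] at hC'
      obtain ⟨_, hlen', hreach'⟩ := hC'
      rw [Finset.mem_filter, Finset.mem_filter]
      have hdl : (C'.blocks ++ [a]).dropLast = C'.blocks := by simp
      have hgd : (C'.blocks ++ [a]).getD l 0 = a := by
        rw [List.getD_append_right _ _ _ _ (by omega)]
        rw [hlen', Nat.sub_self]
        rfl
      refine ⟨⟨Finset.mem_univ _, ?_, ?_⟩, ?_⟩
      · simp [hlen']
      · rw [reach_append, hreach', hstp]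
      · rw [hdl, hgd, hreach']
    case left =>
      intro C hC
      rw [Finset.mem_filter, Finset.mem_filter] at hC
      obtain ⟨⟨_, hlen, _⟩, hfib⟩ := hC
      obtain ⟨hlen', hcat⟩ := concat_struct hlen
      have ha : C.blocks.getD l 0 = a := congrArg Prod.snd hfib
      exact Composition.ext (by
        show C.blocks.dropLast ++ [a] = C.blocks
        conv_rhs => rw [hcat]
        rw [ha])
    case right =>
      intro C' hC'
      exact Composition.ext (by
        show (C'.blocks ++ [a]).dropLast = C'.blocks
        simp)
  · rw [if_neg hstp]
    rw [Finset.card_eq_zero, Finset.filter_eq_empty_iff]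
    intro C hC
    rw [Finset.mem_filter] at hC
    obtain ⟨_, hlen, hreach⟩ := hC
    obtain ⟨hlen', hcat⟩ := concat_struct hlen
    intro hfib
    have hj : reach m C.blocks.dropLast = j := congrArg Prod.fst hfib
    have ha : C.blocks.getD l 0 = a := congrArg Prod.snd hfib
    rw [hcat, reach_append, hj, ha] at hreach
    exact hstp hreach

end VP

namespace VP
variable {n : ℕ} {m : Fin n → ℕ}

open Classical in
theorem Fser_master (i : ℕ) :
    Fser m i = (if i = 0 then (1 : MvPowerSeries (Fin 2) ℚ) else 0) +
      ∑ j ∈ Finset.range (n + 1), Fser m j * Wser (Aset m j i) := by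
  classical
  ext d
  rw [map_add, map_sum]
  rw [coeff_Fser, card_lists_eq (fun c => reach m c = i) (d 0) (d 1)]
  beta_reduce
  by_cases hd1 : d 1 = 0
  · -- length-zero coefficients
    have hzero : ∀ j ∈ Finset.range (n + 1),
        MvPowerSeries.coeff d (Fser m j * Wser (Aset m j i)) = 0 := by
      intro j _
      rw [coeff_mul_Wser _ _ (Aset_not0 _ _), if_pos hd1]
    rw [Finset.sum_eq_zero hzero, add_zero]
    by_cases hi : i = 0
    · subst hi
      rw [if_pos rfl]
      by_cases hd0 : d 0 = 0
      · have hdz : d = 0 := by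
          rw [← fs_eta d, hd0, hd1]
          ext t
          have : t = 0 ∨ t = 1 := by omega
          rcases this with h | h <;> subst h <;> simp [fs_apply0, fs_apply1]
        rw [MvPowerSeries.coeff_one, if_pos hdz]
        have huniv : (Finset.univ.filter (fun C : Composition (d 0) =>
            C.blocks.length = d 1 ∧ reach m C.blocks = 0)) = Finset.univ := by
          rw [Finset.filter_eq_self]
          intro C _
          have hnil : C.blocks = [] := by
            cases hb : C.blocks with
            | nil => rfl
            | cons x t =>
              have hpos := C.blocks_pos (by rw [hb]; exact List.mem_cons_self)
              have hsum := C.blocks_sum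
              rw [hb] at hsum
              simp [List.sum_cons] at hsum
              omega
          rw [hnil, hd1]
          exact ⟨rfl, rfl⟩
        rw [huniv, Finset.card_univ]
        have hcc : Fintype.card (Composition (d 0)) = 1 := by
          rw [hd0, composition_card]
          norm_num
        rw [hcc]
        norm_num
      · have hdz : d ≠ 0 := by
          intro h
          exact hd0 (by rw [h]; rfl)
        rw [MvPowerSeries.coeff_one, if_neg hdz]
        norm_cast
        rw [Finset.card_eq_zero, Finset.filter_eq_empty_iff]
        intro C _
        rw [hd1]
        rintro ⟨hlen, _⟩
        have hnil : C.blocks = [] := List.length_eq_zero_iff.mp hlen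
        have hsum := C.blocks_sum
        rw [hnil] at hsum
        exact hd0 (by simpa using hsum.symm)
    · rw [if_neg hi, map_zero (MvPowerSeries.coeff d)]
      norm_cast
      rw [Finset.card_eq_zero, Finset.filter_eq_empty_iff]
      intro C _
      rintro ⟨hlen, hreach⟩
      rw [hd1] at hlen
      have hnil : C.blocks = [] := List.length_eq_zero_iff.mp hlen
      rw [hnil] at hreach
      exact hi (by simpa using hreach.symm)
  · -- positive length
    obtain ⟨l, hl⟩ : ∃ l, d 1 = l + 1 := ⟨d 1 - 1, by omega⟩
    have hdz : d ≠ 0 := by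
      intro h
      exact hd1 (by rw [h]; rfl)
    have hdelta : MvPowerSeries.coeff d
        (if i = 0 then (1 : MvPowerSeries (Fin 2) ℚ) else 0) = 0 := by
      split_ifs
      · rw [MvPowerSeries.coeff_one, if_neg hdz]
      · exact map_zero _
    rw [hdelta]
    have hterm : ∀ j, MvPowerSeries.coeff d (Fser m j * Wser (Aset m j i)) =
        ∑ a ∈ (Finset.Icc 1 (d 0)).filter (· ∈ Aset m j i),
          ((Finset.univ.filter (fun C : Composition (d 0 - a) =>
            C.blocks.length = l ∧ reach m C.blocks = j)).card : ℚ) := by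
      intro j
      rw [coeff_mul_Wser _ _ (Aset_not0 _ _), if_neg hd1]
      apply Finset.sum_congr rfl
      intro a _
      rw [coeff_Fser, card_lists_eq (fun c => reach m c = j) (fs (d 0 - a) (d 1 - 1) 0)
        (fs (d 0 - a) (d 1 - 1) 1), fs_apply0, fs_apply1, hl]
      norm_num
    simp only [hterm]
    have hstep := card_step (m := m) (d 0) l i
    rw [Finset.sum_product] at hstep
    rw [hl, zero_add]
    rw [show ((Finset.univ.filter (fun C : Composition (d 0) =>
      C.blocks.length = l + 1 ∧ reach m C.blocks = i)).card : ℚ) =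
      ((∑ j ∈ Finset.range (n + 1), ∑ a ∈ Finset.Icc 1 (d 0),
        if stp m j a = i then
          (Finset.univ.filter (fun C : Composition (d 0 - a) =>
            C.blocks.length = l ∧ reach m C.blocks = j)).card
        else 0 : ℕ) : ℚ) from by rw [← hstep]]
    push_cast
    apply Finset.sum_congr rfl
    intro j _
    rw [Finset.sum_filter]
    apply Finset.sum_congr rfl
    intro a ha
    rw [Finset.mem_Icc] at ha
    have hiff : (a ∈ Aset m j i) = (stp m j a = i) := by
      simp only [Aset, Set.mem_setOf_eq]
      rw [eq_iff_iff]
      constructor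
      · rintro ⟨_, h⟩; exact h
      · intro h; exact ⟨ha.1, h⟩
    rw [hiff]
    split_ifs <;> simp

end VP

namespace VP
variable {n : ℕ} {m : Fin n → ℕ}

noncomputable def Tser (m : Fin n → ℕ) (i : ℕ) : MvPowerSeries (Fin 2) ℚ :=
  ∑ j ∈ Finset.range i, Fser m j * px ^ (Ms m i - Ms m j)

theorem E0 (hm : ∀ i, 1 ≤ m i) (hn : 1 ≤ n) :
    Fser m 0 * Dfac (mu m 0) = 1 - px := by
  have h := Fser_master (m := m) 0
  rw [if_pos rfl] at h
  have hsum : ∑ j ∈ Finset.range (n + 1), Fser m j * Wser (Aset m j 0) =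
      Fser m 0 * Wser (Aset m 0 0) := by
    apply Finset.sum_eq_single_of_mem 0 (Finset.mem_range.mpr (by omega))
    intro j hj hj0
    rw [Finset.mem_range] at hj
    rw [Aset_empty_of_lt (by omega) (by omega), Wser_zero (by simp), mul_zero]
  rw [hsum, Aset_diag hm (by omega)] at h
  have hW : Wser {a | 1 ≤ a ∧ a < mu m 0} * (1 - px) = pu * px ^ 1 - pu * px ^ (mu m 0) :=
    Wser_Ico_mul 1 (mu m 0) (mu_pos hm 0)
  rw [pow_one] at hW
  simp only [Dfac]
  linear_combination (1 - px) * h + Fser m 0 * hW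

theorem Ei (hm : ∀ i, 1 ≤ m i) (i : ℕ) (h1 : 1 ≤ i) (h2 : i < n) :
    Fser m i * Dfac (mu m i) = pu * (1 - px ^ (mu m i)) * Tser m i := by
  have h := Fser_master (m := m) i
  rw [if_neg (by omega), zero_add] at h
  have hsub : ∑ j ∈ Finset.range (n + 1), Fser m j * Wser (Aset m j i) =
      ∑ j ∈ Finset.range (i + 1), Fser m j * Wser (Aset m j i) := by
    symm
    apply Finset.sum_subset (Finset.range_subset_range.mpr (by omega))
    intro j hj hj'
    rw [Finset.mem_range] at hj hj'
    rw [Aset_empty_of_lt (by omega) (by omega), Wser_zero (by simp), mul_zero]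
  rw [hsub, Finset.sum_range_succ] at h
  have hWii : Wser (Aset m i i) * (1 - px) = pu * px - pu * px ^ (mu m i) := by
    rw [Aset_diag hm h2]
    have := Wser_Ico_mul 1 (mu m i) (mu_pos hm i)
    rwa [pow_one] at this
  have key : Fser m i * Dfac (mu m i) =
      (∑ j ∈ Finset.range i, Fser m j * Wser (Aset m j i)) * (1 - px) := by
    simp only [Dfac]
    linear_combination (1 - px) * h + Fser m i * hWii
  rw [key, Finset.sum_mul]
  rw [Tser, Finset.mul_sum]
  apply Finset.sum_congr rfl
  intro j hj
  rw [Finset.mem_range] at hj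
  have hMs1 : Ms m j ≤ Ms m i := Ms_mono hm (by omega)
  have hMs2 : Ms m (i + 1) = Ms m i + mu m i := Ms_succ m i
  have hWj : Wser (Aset m j i) * (1 - px) =
      pu * px ^ (Ms m i - Ms m j) - pu * px ^ (Ms m (i + 1) - Ms m j) := by
    rw [Aset_lt hm (by omega) h2]
    exact Wser_Ico_mul _ _ (by omega)
  have hexp : Ms m (i + 1) - Ms m j = (Ms m i - Ms m j) + mu m i := by omega
  rw [mul_assoc, hWj, hexp, pow_add]
  ring

theorem En (hm : ∀ i, 1 ≤ m i) (hn : 1 ≤ n) :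
    Fser m n * (1 - px - pu * px) = pu * Tser m n := by
  have h := Fser_master (m := m) n
  rw [if_neg (by omega), zero_add, Finset.sum_range_succ] at h
  have hWnn : Wser (Aset m n n) * (1 - px) = pu * px := by
    rw [Aset_diag_n]
    have := Wser_Ici_mul 1
    rwa [pow_one] at this
  have key : Fser m n * (1 - px - pu * px) =
      (∑ j ∈ Finset.range n, Fser m j * Wser (Aset m j n)) * (1 - px) := by
    linear_combination (1 - px) * h + Fser m n * hWnn
  rw [key, Finset.sum_mul, Tser, Finset.mul_sum]
  apply Finset.sum_congr rfl
  intro j hj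
  rw [Finset.mem_range] at hj
  rw [mul_assoc, Aset_lt_n hm hj, Wser_Ici_mul]
  ring

end VP

namespace VP
variable {n : ℕ} {m : Fin n → ℕ}

theorem constCoeff_Dfac (k : ℕ) (hk : 1 ≤ k) :
    MvPowerSeries.constantCoeff (Dfac k) = 1 := by
  simp [Dfac, px, pu, zero_pow (by omega : k ≠ 0)]

theorem constCoeff_E :
    MvPowerSeries.constantCoeff (1 - px - pu * px) = 1 := by
  simp [px, pu]

theorem eq_mul_inv {a b dd : MvPowerSeries (Fin 2) ℚ}
    (hd : MvPowerSeries.constantCoeff dd ≠ 0) (h : a * dd = b) :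
    a = b * dd⁻¹ := by
  calc a = a * (dd * dd⁻¹) := by rw [MvPowerSeries.mul_inv_cancel dd hd, mul_one]
    _ = a * dd * dd⁻¹ := by ring
    _ = b * dd⁻¹ := by rw [h]

theorem mu_val (i : Fin n) : mu m i.val = m i := by
  simp [mu, i.isLt]

theorem mu_zero (hn : 1 ≤ n) : mu m 0 = m ⟨0, hn⟩ := dif_pos hn

theorem Tser_closed (hm : ∀ i, 1 ≤ m i) (hn : 1 ≤ n) :
    ∀ i, 1 ≤ i → i ≤ n →
      Tser m i = (1 - px) * (Dfac (mu m 0))⁻¹ * px ^ (mu m 0) *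
        ∏ t ∈ Finset.Ico 1 i,
          (px ^ (mu m t) + pu * px ^ (mu m t) * (1 - px ^ (mu m t)) * (Dfac (mu m t))⁻¹) := by
  intro i
  induction i with
  | zero => intro h1 _; omega
  | succ i ih =>
    intro _ hn'
    rcases Nat.eq_zero_or_pos i with rfl | hi
    · rw [Tser, Finset.sum_range_one]
      have hF0 : Fser m 0 = (1 - px) * (Dfac (mu m 0))⁻¹ :=
        eq_mul_inv (by rw [constCoeff_Dfac _ (mu_pos hm 0)]; norm_num) (E0 hm hn)
      have hMs : Ms m 1 - Ms m 0 = mu m 0 := by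
        rw [Ms_succ]
        simp [Ms]
      rw [hMs, hF0, Finset.Ico_self, Finset.prod_empty, mul_one]
    · have hstep : Tser m (i + 1) =
          Tser m i * px ^ (mu m i) + Fser m i * px ^ (mu m i) := by
        rw [Tser, Tser, Finset.sum_range_succ]
        congr 1
        · rw [Finset.sum_mul]
          apply Finset.sum_congr rfl
          intro j hj
          rw [Finset.mem_range] at hj
          have hMs1 : Ms m j ≤ Ms m i := Ms_mono hm (by omega)
          have hMs2 : Ms m (i + 1) = Ms m i + mu m i := Ms_succ m i
          have : Ms m (i + 1) - Ms m j = (Ms m i - Ms m j) + mu m i := by omega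
          rw [this, pow_add, mul_assoc]
        · have : Ms m (i + 1) - Ms m i = mu m i := by
            have := Ms_succ m i
            omega
          rw [this]
      have hFi : Fser m i = pu * (1 - px ^ (mu m i)) * Tser m i * (Dfac (mu m i))⁻¹ :=
        eq_mul_inv (by rw [constCoeff_Dfac _ (mu_pos hm i)]; norm_num)
          (Ei hm i hi (by omega))
      rw [hstep, hFi, ih hi (by omega), Finset.prod_Ico_succ_top (by omega : 1 ≤ i)]
      ring

theorem Fser_final (hm : ∀ i, 1 ≤ m i) (hn : 1 ≤ n) :
    Fser m n = pu * px ^ (mu m 0) * (1 - px) * (Dfac (mu m 0))⁻¹ *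
      (1 - px - pu * px)⁻¹ *
      ∏ t ∈ Finset.Ico 1 n,
        (px ^ (mu m t) + pu * px ^ (mu m t) * (1 - px ^ (mu m t)) * (Dfac (mu m t))⁻¹) := by
  have hFn : Fser m n = (pu * Tser m n) * (1 - px - pu * px)⁻¹ :=
    eq_mul_inv (by rw [constCoeff_E]; norm_num) (En hm hn)
  rw [hFn, Tser_closed hm hn n hn (le_refl n)]
  ring

theorem prod_eq (hn : 1 ≤ n) :
    (∏ i ∈ Finset.univ.filter fun i : Fin n => i.val ≠ 0,
        (px ^ (m i) + pu * px ^ (m i) * (1 - px ^ (m i)) * (Dfac (m i))⁻¹)) =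
      ∏ t ∈ Finset.Ico 1 n,
        (px ^ (mu m t) + pu * px ^ (mu m t) * (1 - px ^ (mu m t)) * (Dfac (mu m t))⁻¹) := by
  apply Finset.prod_bij (i := fun (a : Fin n) _ => a.val)
  · intro a ha
    rw [Finset.mem_filter] at ha
    rw [Finset.mem_Ico]
    exact ⟨by omega, a.isLt⟩
  · intro a1 _ a2 _ h
    exact Fin.ext h
  · intro b hb
    rw [Finset.mem_Ico] at hb
    refine ⟨⟨b, hb.2⟩, ?_, rfl⟩
    rw [Finset.mem_filter]
    exact ⟨Finset.mem_univ _, by simp; omega⟩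
  · intro a ha
    rw [mu_val]

end VP

/-- The generating function `Σ_c x^{sum(c)} u^{len(c)}` over all compositions containing the
vincular pattern `1^{m_1}-…-1^{m_n}` equals
`u x^{m_1}(1−x) D_1⁻¹ (1−x−ux)⁻¹ ∏_{i=2}^n (x^{m_i} + u x^{m_i}(1 − x^{m_i}) D_i⁻¹)`. -/
theorem stmt12 (n : ℕ) (hn : 1 ≤ n) (m : Fin n → ℕ) (hm : ∀ i, 1 ≤ m i)
    (S : MvPowerSeries (Fin 2) ℚ)
    (hS : ∀ d : Fin 2 →₀ ℕ, MvPowerSeries.coeff d S =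
      Nat.card {c : List ℕ //
        (∀ x ∈ c, 0 < x) ∧ c.sum = d 0 ∧ c.length = d 1 ∧ CompContains m c}) :
    S = pu * px ^ (m ⟨0, hn⟩) * (1 - px) * (Dfac (m ⟨0, hn⟩))⁻¹ * (1 - px - pu * px)⁻¹ *
      ∏ i ∈ Finset.univ.filter fun i : Fin n => i.val ≠ 0,
        (px ^ (m i) + pu * px ^ (m i) * (1 - px ^ (m i)) * (Dfac (m i))⁻¹) := by
  have hSF : S = VP.Fser m n := by
    ext d
    rw [hS d, VP.coeff_Fser]
    congr 1
    apply Nat.card_congr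
    apply Equiv.subtypeEquivRight
    intro c
    constructor
    · rintro ⟨h1, h2, h3, h4⟩
      exact ⟨h1, h2, h3, (VP.compContains_iff_reach hm c).mp h4⟩
    · rintro ⟨h1, h2, h3, h4⟩
      exact ⟨h1, h2, h3, (VP.compContains_iff_reach hm c).mpr h4⟩
  rw [hSF, VP.Fser_final hm hn, ← VP.prod_eq hn, VP.mu_zero hn]
end
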